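/- arXiv:0707.3627 — 4 statements merged into one kernel-verified Lean document; each statement's English description precedes it below -/
import Mathlib

section
/- Assume k is infinite. For every prime two-sided ideal P of L, the intersection ⋂_{h∈H} h(P) of the H-orbit of P equals the zero ideal; equivalently, the H-orbit of P is Zariski dense in the prime spectrum of L. -/
/-!
Common setup: `q`-commutative power series ring `R = k_q[[x_1,…,x_n]]` and
`q`-commutative Laurent series ring `L = k_q[[x_1^{±1},…,x_n^{±1}]]`, characterized
by their coefficient descriptions (twisted convolution multiplication).
-/

noncomputable section

/-- A multiplicatively antisymmetric `n × n` matrix over `k`: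
`q_{ii} = 1` and `q_{ij} q_{ji} = 1`. -/
structure QMatrix (k : Type*) [Field k] (n : ℕ) where
  q : Fin n → Fin n → k
  diag : ∀ i, q i i = 1
  antisym : ∀ i j, q i j * q j i = 1

namespace QMatrix

variable {k : Type*} [Field k] {n : ℕ} (Q : QMatrix k n)

lemma q_ne_zero (i j : Fin n) : Q.q i j ≠ 0 := fun h0 => by
  have h1 := Q.antisym i j
  rw [h0, zero_mul] at h1
  exact zero_ne_one h1

/-- The twisting weight `∏_{1 ≤ j < i ≤ n} q_{ij}^{u_i v_j}` (natural exponents), so that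
`x^u · x^v = weight u v · x^{u+v}` in `R`. -/
def weight (u v : Fin n →₀ ℕ) : k :=
  ∏ i : Fin n, ∏ j : Fin n, if j < i then Q.q i j ^ (u i * v j) else 1

/-- The twisting weight `∏_{1 ≤ j < i ≤ n} q_{ij}^{u_i v_j}` (integer exponents), so that
`x^u · x^v = zweight u v · x^{u+v}` in `L`. -/
def zweight (u v : Fin n → ℤ) : k :=
  ∏ i : Fin n, ∏ j : Fin n, if j < i then Q.q i j ^ (u i * v j) else 1

/-- The alternating bicharacter `σ(s,t) = ∏_{i,j} q_{ij}^{s_i t_j}`, so that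
`x^s x^t = σ(s,t) x^t x^s` in `L`. -/
def sigma (s t : Fin n → ℤ) : k :=
  ∏ i : Fin n, ∏ j : Fin n, Q.q i j ^ (s i * t j)

end QMatrix

/-- `R` is (a model of) the `q`-commutative power series ring `k_q[[x_1, …, x_n]]`:
its underlying `k`-vector space is that of all families of coefficients indexed by `ℕ^n`,
the constant series `1` is the multiplicative unit, and multiplication is given by the
twisted convolution: the coefficient of `x^s` in `f·g` is
`∑_{u+v=s} f_u g_v ∏_{1≤j<i≤n} q_{ij}^{u_i v_j}`. -/
structure IsQPowerSeriesRing {k : Type*} [Field k] {n : ℕ} (Q : QMatrix k n)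
    (R : Type*) [Ring R] [Algebra k R] where
  coeff : R ≃ₗ[k] ((Fin n →₀ ℕ) → k)
  coeff_one : ∀ s, coeff 1 s = if s = 0 then 1 else 0
  coeff_mul : ∀ f g : R, ∀ s, coeff (f * g) s =
    ∑ uv ∈ Finset.HasAntidiagonal.antidiagonal s, coeff f uv.1 * coeff g uv.2 * Q.weight uv.1 uv.2

namespace IsQPowerSeriesRing

variable {k : Type*} [Field k] {n : ℕ} {Q : QMatrix k n}
variable {R : Type*} [Ring R] [Algebra k R] (h : IsQPowerSeriesRing Q R)

/-- The monic monomial `x^s` of `R`. -/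
def mono (s : Fin n →₀ ℕ) : R :=
  h.coeff.symm (fun t => if t = s then 1 else 0)

/-- The variable `x_i` of `R`. -/
def X (i : Fin n) : R := h.mono (Finsupp.single i 1)

/-- The augmentation ideal `J = ⟨x_1, …, x_n⟩` of `R`, as a two-sided ideal. -/
def Jideal : TwoSidedIdeal R := TwoSidedIdeal.span (Set.range h.X)

/-- For `w ⊆ {1,…,n}`, the two-sided ideal `J_w = ⟨x_i : i ∈ w⟩` of `R`. -/
def Jw (w : Finset (Fin n)) : TwoSidedIdeal R :=
  TwoSidedIdeal.span {r : R | ∃ i ∈ w, r = h.X i}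

/-- The action of `θ ∈ H = (kˣ)^n` on `R`, determined by
`x^s ↦ θ_1^{s_1} ⋯ θ_n^{s_n} x^s` and applied coefficientwise to series. -/
def hAct (θ : Fin n → kˣ) (f : R) : R :=
  h.coeff.symm (fun s => (∏ i, (θ i : k) ^ (s i)) * h.coeff f s)

/-- A two-sided ideal of `R` is `H`-stable if it is mapped to itself by every element
of the torus `H = (kˣ)^n`. -/
def IsHStable (I : TwoSidedIdeal R) : Prop :=
  ∀ θ : Fin n → kˣ, h.hAct θ '' (I : Set R) = (I : Set R)

end IsQPowerSeriesRing

/-- A coefficient family `c : ℤ^n → k` is Laurent-bounded if `c s = 0` whenever some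
coordinate of `s` is sufficiently negative, i.e. `∃ N, min(s_1,…,s_n) < -N → c s = 0`. -/
def LaurentBounded {k : Type*} [Field k] {n : ℕ} (c : (Fin n → ℤ) → k) : Prop :=
  ∃ N : ℕ, ∀ s : Fin n → ℤ, (∃ i, s i < -(N : ℤ)) → c s = 0

/-- `L` is (a model of) the `q`-commutative Laurent series ring
`k_q[[x_1^{±1}, …, x_n^{±1}]]`: its elements correspond, `k`-linearly, to the
Laurent-bounded coefficient families indexed by `ℤ^n`, the constant series `1` is the
multiplicative unit, and multiplication is given by the twisted convolution. -/
structure IsQLaurentSeriesRing {k : Type*} [Field k] {n : ℕ} (Q : QMatrix k n)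
    (L : Type*) [Ring L] [Algebra k L] where
  coeff : L →ₗ[k] ((Fin n → ℤ) → k)
  coeff_injective : Function.Injective coeff
  coeff_bounded : ∀ f, LaurentBounded (coeff f)
  coeff_surjective : ∀ c, LaurentBounded c → ∃ f, coeff f = c
  coeff_one : ∀ s, coeff 1 s = if s = 0 then 1 else 0
  mul_support_finite : ∀ f g : L, ∀ s : Fin n → ℤ,
    (Function.support fun u => coeff f u * coeff g (s - u) * Q.zweight u (s - u)).Finite
  coeff_mul : ∀ f g : L, ∀ s : Fin n → ℤ, coeff (f * g) s =
    ∑ᶠ u : Fin n → ℤ, coeff f u * coeff g (s - u) * Q.zweight u (s - u)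

namespace IsQLaurentSeriesRing

variable {k : Type*} [Field k] {n : ℕ} {Q : QMatrix k n}
variable {L : Type*} [Ring L] [Algebra k L] (h : IsQLaurentSeriesRing Q L)

/-- The action of `θ ∈ H = (kˣ)^n` on `L`, determined by
`x^s ↦ θ_1^{s_1} ⋯ θ_n^{s_n} x^s` and applied coefficientwise to series. -/
def hAct (θ : Fin n → kˣ) (f : L) : L :=
  Classical.choose (h.coeff_surjective
    (fun s => (∏ i, ((θ i ^ (s i) : kˣ) : k)) * h.coeff f s)
    (by
      obtain ⟨N, hN⟩ := h.coeff_bounded f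
      exact ⟨N, fun s hs => by simp only []; rw [hN s hs, mul_zero]⟩))

/-- A two-sided ideal of `L` is `H`-stable if it is mapped to itself by every element
of the torus `H = (kˣ)^n`. -/
def IsHStable (I : TwoSidedIdeal L) : Prop :=
  ∀ θ : Fin n → kˣ, h.hAct θ '' (I : Set L) = (I : Set L)

end IsQLaurentSeriesRing

/-- A two-sided ideal `P` of a (possibly noncommutative) ring `A` is prime if `P ≠ A`
and whenever `I, J` are two-sided ideals with `IJ ⊆ P`, then `I ⊆ P` or `J ⊆ P`. -/
def IsPrimeTwoSided {A : Type*} [Ring A] (P : TwoSidedIdeal A) : Prop :=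
  P ≠ ⊤ ∧ ∀ I J : TwoSidedIdeal A, (∀ a ∈ I, ∀ b ∈ J, a * b ∈ P) → I ≤ P ∨ J ≤ P


section Combinatorics

/-- Total degree of a multi-exponent. -/
def degz {n : ℕ} (s : Fin n → ℤ) : ℤ := ∑ i, s i

lemma degz_add {n : ℕ} (s t : Fin n → ℤ) : degz (s + t) = degz s + degz t := by
  unfold degz
  rw [← Finset.sum_add_distrib]
  rfl

lemma degz_sub {n : ℕ} (s t : Fin n → ℤ) : degz (s - t) = degz s - degz t := by
  unfold degz
  rw [← Finset.sum_sub_distrib]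
  rfl

lemma degz_nonneg {n : ℕ} {s : Fin n → ℤ} (hs : ∀ i, 0 ≤ s i) : 0 ≤ degz s :=
  Finset.sum_nonneg fun i _ => hs i

lemma le_degz {n : ℕ} {s : Fin n → ℤ} (hs : ∀ i, 0 ≤ s i) (i : Fin n) : s i ≤ degz s :=
  Finset.single_le_sum (f := fun i => s i) (fun j _ => hs j) (Finset.mem_univ i)

lemma finite_nn_deg_le {n : ℕ} (d : ℤ) :
    {s : Fin n → ℤ | (∀ i, 0 ≤ s i) ∧ degz s ≤ d}.Finite := by
  refine (Set.Finite.pi (fun i : Fin n => Set.finite_Icc (0 : ℤ) d)).subset ?_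
  intro s hs
  refine Set.mem_pi.2 fun i _ => Set.mem_Icc.2 ⟨hs.1 i, ?_⟩
  exact le_trans (le_degz hs.1 i) hs.2

/-- Dickson's lemma, in the form of a finite dominating set. -/
lemma exists_min_basis {n : ℕ} (U : Set (Fin n → ℕ)) :
    ∃ B : Finset (Fin n → ℕ), ↑B ⊆ U ∧ ∀ u ∈ U, ∃ b ∈ B, b ≤ u := by
  classical
  set M : Set (Fin n → ℕ) := {a | a ∈ U ∧ ∀ a' ∈ U, a' ≤ a → a' = a} with hM
  have hanti : IsAntichain (· ≤ ·) M := by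
    intro a ha b hb hab hle
    exact hab (hb.2 a ha.1 hle)
  have inst : ∀ i : Fin n, IsWellOrder ((fun _ : Fin n => ℕ) i) (· < ·) :=
    fun _ => (inferInstance : IsWellOrder ℕ (· < ·))
  have hMfin : M.Finite :=
    hanti.finite_of_partiallyWellOrderedOn (Set.isPWO_of_wellQuasiOrderedLE M)
  have key : ∀ (N : ℕ), ∀ u ∈ U, (∑ i, u i) < N → ∃ m ∈ M, m ≤ u := by
    intro N
    induction N with
    | zero => exact fun u _ hn => absurd hn (Nat.not_lt_zero _)
    | succ N ih =>
        intro u hu hn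
        by_cases hm : ∀ a' ∈ U, a' ≤ u → a' = u
        · exact ⟨u, ⟨hu, hm⟩, le_refl u⟩
        · push_neg at hm
          obtain ⟨a', ha'U, ha'le, ha'ne⟩ := hm
          have hlt : (∑ i, a' i) < ∑ i, u i := by
            refine Finset.sum_lt_sum (fun i _ => ha'le i) ?_
            by_contra hc
            push_neg at hc
            exact ha'ne (funext fun i => le_antisymm (ha'le i) (hc i (Finset.mem_univ i)))
          obtain ⟨m, hmM, hmle⟩ := ih a' ha'U (by omega)
          exact ⟨m, hmM, le_trans hmle ha'le⟩
  refine ⟨hMfin.toFinset, ?_, ?_⟩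
  · intro b hb
    exact ((hMfin.mem_toFinset).1 hb).1
  · intro u hu
    obtain ⟨m, hmM, hmle⟩ := key ((∑ i, u i) + 1) u hu (by omega)
    exact ⟨m, hMfin.mem_toFinset.2 hmM, hmle⟩

/-- Dickson's lemma over nonnegative integer vectors. -/
lemma exists_min_basis_int {n : ℕ} (T : Set (Fin n → ℤ)) (hT : ∀ t ∈ T, ∀ i, 0 ≤ t i) :
    ∃ B : Finset (Fin n → ℤ), ↑B ⊆ T ∧ ∀ t ∈ T, ∃ b ∈ B, ∀ i, b i ≤ t i := by
  classical
  set ι : (Fin n → ℕ) → (Fin n → ℤ) := fun a i => (a i : ℤ) with hι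
  set π : (Fin n → ℤ) → (Fin n → ℕ) := fun t i => (t i).toNat with hπ
  obtain ⟨B₀, hB₀, hdom⟩ := exists_min_basis (π '' T)
  refine ⟨B₀.image ι, ?_, ?_⟩
  · intro b hb
    simp only [Finset.coe_image, Set.mem_image, Finset.mem_coe] at hb
    obtain ⟨b₀, hb₀, rfl⟩ := hb
    obtain ⟨t, htT, rfl⟩ := hB₀ hb₀
    have : ι (π t) = t := funext fun i => Int.toNat_of_nonneg (hT t htT i)
    rw [this]
    exact htT
  · intro t htT
    obtain ⟨b₀, hb₀, hle⟩ := hdom (π t) ⟨t, htT, rfl⟩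
    refine ⟨ι b₀, Finset.mem_image_of_mem ι hb₀, fun i => ?_⟩
    calc (ι b₀) i ≤ ((π t i : ℕ) : ℤ) := Int.ofNat_le.2 (hle i)
      _ = t i := Int.toNat_of_nonneg (hT t htT i)

end Combinatorics
namespace IsQLaurentSeriesRing
variable {k : Type*} [Field k] {n : ℕ} {Q : QMatrix k n}
variable {L : Type*} [Ring L] [Algebra k L] (h : IsQLaurentSeriesRing Q L)

/-- the character of the torus attached to `s`. -/
def chi (θ : Fin n → kˣ) (s : Fin n → ℤ) : k := ∏ i, ((θ i ^ (s i) : kˣ) : k)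

lemma chi_ne_zero (θ : Fin n → kˣ) (s : Fin n → ℤ) : chi θ s ≠ 0 := by
  unfold chi
  refine Finset.prod_ne_zero_iff.2 fun i _ => ?_
  exact Units.ne_zero _

lemma chi_one (s : Fin n → ℤ) : chi (1 : Fin n → kˣ) s = 1 := by
  unfold chi
  simp

lemma chi_mul (θ θ' : Fin n → kˣ) (s : Fin n → ℤ) :
    chi (θ * θ') s = chi θ s * chi θ' s := by
  unfold chi
  rw [← Finset.prod_mul_distrib]
  refine Finset.prod_congr rfl fun i _ => ?_
  rw [Pi.mul_apply, mul_zpow, Units.val_mul]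

lemma chi_add (θ : Fin n → kˣ) (s t : Fin n → ℤ) :
    chi θ (s + t) = chi θ s * chi θ t := by
  unfold chi
  rw [← Finset.prod_mul_distrib]
  refine Finset.prod_congr rfl fun i _ => ?_
  rw [Pi.add_apply, zpow_add, Units.val_mul]

lemma coeff_hAct (θ : Fin n → kˣ) (f : L) :
    h.coeff (h.hAct θ f) = fun s => chi θ s * h.coeff f s := by
  have := Classical.choose_spec (h.coeff_surjective
    (fun s => (∏ i, ((θ i ^ (s i) : kˣ) : k)) * h.coeff f s)
    (by
      obtain ⟨N, hN⟩ := h.coeff_bounded f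
      exact ⟨N, fun s hs => by simp only []; rw [hN s hs, mul_zero]⟩))
  exact this

lemma hAct_one (f : L) : h.hAct 1 f = f := by
  apply h.coeff_injective
  rw [coeff_hAct]
  funext s
  rw [chi_one, one_mul]

lemma hAct_hAct (θ θ' : Fin n → kˣ) (f : L) :
    h.hAct θ (h.hAct θ' f) = h.hAct (θ * θ') f := by
  apply h.coeff_injective
  rw [coeff_hAct, coeff_hAct, coeff_hAct]
  funext s
  rw [chi_mul]
  ring

lemma hAct_zero (θ : Fin n → kˣ) : h.hAct θ (0 : L) = 0 := by
  apply h.coeff_injective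
  rw [coeff_hAct]
  funext s
  simp

lemma hAct_sub (θ : Fin n → kˣ) (f g : L) :
    h.hAct θ (f - g) = h.hAct θ f - h.hAct θ g := by
  apply h.coeff_injective
  rw [map_sub, coeff_hAct, coeff_hAct, coeff_hAct]
  funext s
  simp [mul_sub]

lemma hAct_add (θ : Fin n → kˣ) (f g : L) :
    h.hAct θ (f + g) = h.hAct θ f + h.hAct θ g := by
  apply h.coeff_injective
  rw [map_add, coeff_hAct, coeff_hAct, coeff_hAct]
  funext s
  simp [mul_add]

lemma hAct_smul (θ : Fin n → kˣ) (c : k) (f : L) :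
    h.hAct θ (c • f) = c • h.hAct θ f := by
  apply h.coeff_injective
  rw [map_smul, coeff_hAct, coeff_hAct, map_smul]
  funext s
  simp [Pi.smul_apply, smul_eq_mul]
  ring

lemma hAct_mul (θ : Fin n → kˣ) (f g : L) :
    h.hAct θ (f * g) = h.hAct θ f * h.hAct θ g := by
  apply h.coeff_injective
  funext s
  simp only [coeff_hAct]
  rw [h.coeff_mul, h.coeff_mul]
  simp only [coeff_hAct]
  have hfin := h.mul_support_finite f g s
  rw [mul_finsum _ _]
  refine finsum_congr fun u => ?_
  have hc : chi θ u * chi θ (s - u) = chi θ s := by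
    rw [← chi_add]; congr 1; abel
  calc chi θ s * (h.coeff f u * h.coeff g (s - u) * Q.zweight u (s - u))
      = (chi θ u * chi θ (s - u)) * (h.coeff f u * h.coeff g (s - u) * Q.zweight u (s - u)) := by rw [hc]
    _ = chi θ u * h.coeff f u * (chi θ (s - u) * h.coeff g (s - u)) * Q.zweight u (s - u) := by ring

lemma zweight_ne_zero (u v : Fin n → ℤ) : Q.zweight u v ≠ 0 := by
  unfold QMatrix.zweight
  refine Finset.prod_ne_zero_iff.2 fun i _ => Finset.prod_ne_zero_iff.2 fun j _ => ?_
  split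
  · exact zpow_ne_zero _ (Q.q_ne_zero i j)
  · exact one_ne_zero

lemma monoBound (s : Fin n → ℤ) :
    LaurentBounded (fun t => if t = s then (1 : k) else 0) := by
  refine ⟨∑ i, (s i).natAbs, fun t ht => ?_⟩
  obtain ⟨i, hi⟩ := ht
  show (if t = s then (1 : k) else 0) = 0
  rw [if_neg]
  rintro rfl
  have h1 : (t i).natAbs ≤ ∑ j, (t j).natAbs :=
    Finset.single_le_sum (f := fun j => (t j).natAbs) (fun j _ => Nat.zero_le _) (Finset.mem_univ i)
  omega

/-- The (Laurent) monomial `x^s` in `L`. -/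
def monoL (s : Fin n → ℤ) : L :=
  Classical.choose (h.coeff_surjective (fun t => if t = s then 1 else 0) (monoBound s))

lemma coeff_monoL (s : Fin n → ℤ) :
    h.coeff (h.monoL s) = fun t => if t = s then 1 else 0 :=
  Classical.choose_spec (h.coeff_surjective (fun t => if t = s then 1 else 0) (monoBound s))

lemma monoL_zero : h.monoL (0 : Fin n → ℤ) = (1 : L) := by
  apply h.coeff_injective
  rw [coeff_monoL]
  funext t
  rw [h.coeff_one t]

lemma coeff_monoL_mul (u : Fin n → ℤ) (f : L) (t : Fin n → ℤ) :
    h.coeff (h.monoL u * f) t = Q.zweight u (t - u) * h.coeff f (t - u) := by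
  rw [h.coeff_mul]
  rw [finsum_eq_single _ u]
  · simp only [coeff_monoL, if_pos rfl]
    simp
    ring
  · intro v hv
    simp only [coeff_monoL, if_neg hv, zero_mul]

lemma coeff_mul_monoL (u : Fin n → ℤ) (f : L) (t : Fin n → ℤ) :
    h.coeff (f * h.monoL u) t = h.coeff f (t - u) * Q.zweight (t - u) u := by
  rw [h.coeff_mul]
  rw [finsum_eq_single _ (t - u)]
  · simp only [coeff_monoL]
    rw [if_pos (by abel), mul_one, sub_sub_cancel]
  · intro v hv
    simp only [coeff_monoL]
    rw [if_neg, mul_zero, zero_mul]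
    intro hc
    apply hv
    have h2 : v + (t - v) = v + u := by rw [hc]
    have h3 : t = v + u := by rwa [add_sub_cancel] at h2
    rw [h3]; abel

lemma monoL_mul_monoL (s t : Fin n → ℤ) :
    h.monoL s * h.monoL t = Q.zweight s t • h.monoL (s + t) := by
  apply h.coeff_injective
  funext v
  rw [coeff_monoL_mul, map_smul]
  simp only [Pi.smul_apply, coeff_monoL, smul_eq_mul]
  by_cases hv : v = s + t
  · rw [if_pos (by rw [hv]; abel), if_pos hv, mul_one, mul_one]
    congr 1
    rw [hv]; abel
  · rw [if_neg, if_neg hv, mul_zero, mul_zero]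
    intro hc
    apply hv
    have h2 : (v - s) + s = t + s := by rw [hc]
    rw [sub_add_cancel] at h2
    rw [h2]; abel

end IsQLaurentSeriesRing
namespace IsQLaurentSeriesRing
variable {k : Type*} [Field k] [Infinite k] {n : ℕ} {Q : QMatrix k n}
variable {L : Type*} [Ring L] [Algebra k L] (h : IsQLaurentSeriesRing Q L)

lemma exists_zpow_ne_one (m : ℤ) (hm : m ≠ 0) : ∃ u : kˣ, u ^ m ≠ 1 := by
  set d := m.natAbs with hdd
  have hd : d ≠ 0 := Int.natAbs_ne_zero.2 hm
  have hp : (Polynomial.X ^ d - Polynomial.C (1 : k)) ≠ 0 :=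
    Polynomial.X_pow_sub_C_ne_zero (Nat.pos_of_ne_zero hd) 1
  have hfin : {x : k | (Polynomial.X ^ d - Polynomial.C (1 : k)).IsRoot x}.Finite :=
    Polynomial.finite_setOf_isRoot hp
  have hfin2 : ({x : k | x ^ d = 1} ∪ {(0 : k)}).Finite := by
    refine (hfin.union (Set.finite_singleton 0)).subset ?_
    rintro x (hx | hx)
    · left
      simp only [Set.mem_setOf_eq] at hx
      simp [Polynomial.IsRoot, sub_eq_zero, hx]
    · right; exact hx
  obtain ⟨x, hx⟩ := hfin2.infinite_compl.nonempty
  have hx0 : x ≠ 0 := fun h0 => hx (Or.inr h0)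
  have hxd : x ^ d ≠ 1 := fun h1 => hx (Or.inl h1)
  refine ⟨Units.mk0 x hx0, fun h1 => ?_⟩
  have hud : (Units.mk0 x hx0) ^ d = 1 := by
    rcases Int.natAbs_eq m with he | he
    · rw [he, zpow_natCast] at h1; exact h1
    · rw [he, zpow_neg, zpow_natCast, inv_eq_one] at h1; exact h1
  apply hxd
  have := congrArg (Units.val) hud
  rw [Units.val_pow_eq_pow_val] at this
  exact this

lemma exists_chi_ne (s t : Fin n → ℤ) (hst : s ≠ t) :
    ∃ θ : Fin n → kˣ, chi θ s ≠ (chi θ t : k) := by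
  have : ∃ i, s i ≠ t i := by
    by_contra hc
    push_neg at hc
    exact hst (funext hc)
  obtain ⟨i, hi⟩ := this
  obtain ⟨u, hu⟩ := exists_zpow_ne_one (k := k) (s i - t i) (sub_ne_zero.2 hi)
  refine ⟨fun j => if j = i then u else 1, ?_⟩
  have key : ∀ v : Fin n → ℤ,
      chi (fun j => if j = i then u else 1) v = ((u ^ v i : kˣ) : k) := by
    intro v
    unfold chi
    rw [Finset.prod_eq_single i]
    · simp
    · intro j _ hj
      simp [hj]
    · intro hni
      exact absurd (Finset.mem_univ i) hni
  rw [key, key]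
  intro hequ
  apply hu
  have huv : (u ^ s i) = (u ^ t i) := Units.ext hequ
  rw [zpow_sub, huv, mul_inv_cancel]
set_option linter.unusedSectionVars false

variable (P : TwoSidedIdeal L)

/-- The set of `f ∈ L` all of whose torus twists lie in `P`. -/
def setS : Set L := {f | ∀ θ : Fin n → kˣ, h.hAct θ f ∈ P}

variable {h P}

lemma setS_subset {f : L} (hf : f ∈ h.setS P) : f ∈ P := by
  have := hf 1
  rwa [hAct_one] at this

lemma setS_zero : (0 : L) ∈ h.setS P := fun θ => by
  rw [hAct_zero]; exact P.zero_mem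

lemma setS_sub {f g : L} (hf : f ∈ h.setS P) (hg : g ∈ h.setS P) :
    f - g ∈ h.setS P := fun θ => by
  rw [hAct_sub]; exact P.sub_mem (hf θ) (hg θ)

lemma setS_add {f g : L} (hf : f ∈ h.setS P) (hg : g ∈ h.setS P) :
    f + g ∈ h.setS P := fun θ => by
  rw [hAct_add]; exact P.add_mem (hf θ) (hg θ)

lemma setS_smul (c : k) {f : L} (hf : f ∈ h.setS P) : c • f ∈ h.setS P := fun θ => by
  rw [hAct_smul, Algebra.smul_def]
  exact P.mul_mem_left _ _ (hf θ)

lemma setS_hAct (θ' : Fin n → kˣ) {f : L} (hf : f ∈ h.setS P) :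
    h.hAct θ' f ∈ h.setS P := fun θ => by
  rw [hAct_hAct]; exact hf _

lemma setS_mul_left (a : L) {f : L} (hf : f ∈ h.setS P) : a * f ∈ h.setS P := fun θ => by
  rw [hAct_mul]; exact P.mul_mem_left _ _ (hf θ)

lemma setS_mul_right (a : L) {f : L} (hf : f ∈ h.setS P) : f * a ∈ h.setS P := fun θ => by
  rw [hAct_mul]; exact P.mul_mem_right _ _ (hf θ)

lemma setS_sum {ι : Type*} (F : Finset ι) (g : ι → L) (hg : ∀ i ∈ F, g i ∈ h.setS P) :
    (∑ i ∈ F, g i) ∈ h.setS P := by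
  classical
  induction F using Finset.induction_on with
  | empty => simpa using setS_zero
  | insert _ _ ha ih =>
      rw [Finset.sum_insert ha]
      exact setS_add (hg _ (Finset.mem_insert_self _ _))
        (ih fun i hi => hg i (Finset.mem_insert_of_mem hi))

/-- Vandermonde-style twisting: one can rescale the coefficients of `f ∈ S` by a
function `e` which is `1` at `t` and vanishes on any prescribed finite set. -/
lemma setS_kill {f : L} (hf : f ∈ h.setS P) (t : Fin n → ℤ) (F : Finset (Fin n → ℤ)) :
    ∃ g ∈ h.setS P, ∃ e : (Fin n → ℤ) → k,
      (∀ s, h.coeff g s = e s * h.coeff f s) ∧ e t = 1 ∧ ∀ s ∈ F, s ≠ t → e s = 0 := by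
  classical
  induction F using Finset.induction_on with
  | empty => exact ⟨f, hf, fun _ => 1, fun s => (one_mul _).symm, rfl, by simp⟩
  | @insert a F' ha ih =>
      obtain ⟨g, hg, e, hge, het, heF⟩ := ih
      by_cases hat : a = t
      · refine ⟨g, hg, e, hge, het, fun s hs hst => ?_⟩
        rcases Finset.mem_insert.1 hs with rfl | hs'
        · exact absurd hat hst
        · exact heF s hs' hst
      · obtain ⟨θ, hθ⟩ := exists_chi_ne (k := k) a t hat
        set c : k := chi θ t - chi θ a with hc
        have hc0 : c ≠ 0 := sub_ne_zero.2 (Ne.symm hθ)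
        refine ⟨c⁻¹ • (h.hAct θ g - chi θ a • g),
          setS_smul _ (setS_sub (setS_hAct θ hg) (setS_smul _ hg)),
          fun s => c⁻¹ * (chi θ s - chi θ a) * e s, ?_, ?_, ?_⟩
        · intro s
          rw [map_smul, Pi.smul_apply, map_sub, Pi.sub_apply, map_smul, Pi.smul_apply]
          simp only [coeff_hAct]
          rw [hge s]
          simp only [smul_eq_mul]
          ring
        · show c⁻¹ * (chi θ t - chi θ a) * e t = 1
          rw [het, mul_one, ← hc, inv_mul_cancel₀ hc0]
        · intro s hs hst
          rcases Finset.mem_insert.1 hs with rfl | hs'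
          · show c⁻¹ * (chi θ s - chi θ s) * e s = 0
            rw [sub_self, mul_zero, zero_mul]
          · show c⁻¹ * (chi θ s - chi θ a) * e s = 0
            rw [heF s hs' hst, mul_zero]
end IsQLaurentSeriesRing
namespace IsQLaurentSeriesRing
set_option linter.unusedSectionVars false
variable {k : Type*} [Field k] [Infinite k] {n : ℕ} {Q : QMatrix k n}
variable {L : Type*} [Ring L] [Algebra k L] (h : IsQLaurentSeriesRing Q L)
variable (P : TwoSidedIdeal L)

lemma exists_coeff_ne_zero {f : L} (hf : f ≠ 0) : ∃ s, h.coeff f s ≠ 0 := by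
  by_contra hc
  push_neg at hc
  apply hf
  apply h.coeff_injective
  rw [map_zero]
  exact funext hc

lemma exists_min_support {f : L} (hf : f ≠ 0)
    (hnn : ∀ s, h.coeff f s ≠ 0 → ∀ i, 0 ≤ s i) :
    ∃ t, h.coeff f t ≠ 0 ∧ ∀ s, h.coeff f s ≠ 0 → degz t ≤ degz s := by
  obtain ⟨s₀, hs₀⟩ := h.exists_coeff_ne_zero hf
  set D : Set ℕ := {m | ∃ s, h.coeff f s ≠ 0 ∧ degz s = (m : ℤ)} with hD
  have hmem : ∀ s, h.coeff f s ≠ 0 → (degz s).toNat ∈ D := fun s hs =>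
    ⟨s, hs, (Int.toNat_of_nonneg (degz_nonneg (hnn s hs))).symm⟩
  have hne : D.Nonempty := ⟨_, hmem s₀ hs₀⟩
  obtain ⟨t, hts, htd⟩ := Nat.sInf_mem hne
  refine ⟨t, hts, fun s hs => ?_⟩
  rw [htd]
  calc ((sInf D : ℕ) : ℤ) ≤ (((degz s).toNat : ℕ) : ℤ) := by
        exact_mod_cast Nat.sInf_le (hmem s hs)
    _ = degz s := Int.toNat_of_nonneg (degz_nonneg (hnn s hs))

/-- The set of exponents appearing in the minimal-degree slice of some element of
`setS` with nonnegative support. -/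
def setT : Set (Fin n → ℤ) :=
  {t | (∀ i, 0 ≤ t i) ∧ ∃ f ∈ h.setS P,
    (∀ s, h.coeff f s ≠ 0 → ∀ i, 0 ≤ s i) ∧ h.coeff f t ≠ 0 ∧
      ∀ s, h.coeff f s ≠ 0 → degz t ≤ degz s}

variable {h P}

lemma setT_witness {t : Fin n → ℤ} (ht : t ∈ h.setT P) (M : ℤ) :
    ∃ g ∈ h.setS P, (∀ s, h.coeff g s ≠ 0 → ∀ i, 0 ≤ s i) ∧ h.coeff g t = 1 ∧
      ∀ s, h.coeff g s ≠ 0 → s = t ∨ M < degz s := by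
  obtain ⟨htnn, f, hfS, hfnn, hft, hfmin⟩ := ht
  set F := (finite_nn_deg_le (n := n) M).toFinset with hF
  obtain ⟨g₀, hg₀S, e, hge, het, heF⟩ := setS_kill hfS t F
  have hcoeff : ∀ s, h.coeff ((h.coeff f t)⁻¹ • g₀) s = (h.coeff f t)⁻¹ * (e s * h.coeff f s) := by
    intro s
    rw [map_smul, Pi.smul_apply, smul_eq_mul, hge s]
  refine ⟨(h.coeff f t)⁻¹ • g₀, setS_smul _ hg₀S, ?_, ?_, ?_⟩
  · intro s hs
    rw [hcoeff s] at hs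
    refine hfnn s fun h0 => hs ?_
    rw [h0, mul_zero, mul_zero]
  · rw [hcoeff t, het, one_mul, inv_mul_cancel₀ hft]
  · intro s hs
    by_cases hst : s = t
    · exact Or.inl hst
    · right
      rw [hcoeff s] at hs
      have hes : e s ≠ 0 := fun h0 => hs (by rw [h0, zero_mul, mul_zero])
      have hfs : h.coeff f s ≠ 0 := fun h0 => hs (by rw [h0, mul_zero, mul_zero])
      have hsF : s ∉ F := fun hmem => hes (heF s hmem hst)
      rw [hF, Set.Finite.mem_toFinset] at hsF
      simp only [Set.mem_setOf_eq, not_and] at hsF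
      exact lt_of_not_ge (hsF (hfnn s hfs))

end IsQLaurentSeriesRing
namespace IsQLaurentSeriesRing
set_option linter.unusedSectionVars false
variable {k : Type*} [Field k] [Infinite k] {n : ℕ} {Q : QMatrix k n}
variable {L : Type*} [Ring L] [Algebra k L] (h : IsQLaurentSeriesRing Q L)
variable (fb : (Fin n → ℤ) → L) (bsel : (Fin n → ℤ) → Fin n → ℤ) (s0 : Fin n → ℤ)

/-- The (finite) slice of exponents of degree `d` in the support of `y`. -/
def sliceF (y : L) (d : ℤ) : Finset (Fin n → ℤ) :=
  Set.Finite.toFinset (s := {s | h.coeff y s ≠ 0 ∧ (∀ i, 0 ≤ s i) ∧ degz s = d})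
    ((finite_nn_deg_le d).subset (fun s hs => ⟨hs.2.1, le_of_eq hs.2.2⟩))

lemma mem_sliceF {y : L} {d : ℤ} {s : Fin n → ℤ} :
    s ∈ h.sliceF y d ↔ (h.coeff y s ≠ 0 ∧ (∀ i, 0 ≤ s i) ∧ degz s = d) :=
  Set.Finite.mem_toFinset _

/-- One reduction step: subtract the multiples of the generators `fb (bsel s)`
matching the degree-`d` slice of `y`. -/
def corr (y : L) (d : ℤ) : L :=
  ∑ s ∈ h.sliceF y d,
    (h.coeff y s * (Q.zweight (s - bsel s) (bsel s))⁻¹) •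
      (h.monoL (s - bsel s) * fb (bsel s))

/-- The sequence of successive remainders in the reduction of `x^{s0}`. -/
def rseq (m : ℕ) : L :=
  Nat.rec (h.monoL s0) (fun m rm => rm - h.corr fb bsel rm (degz s0 + m)) m

lemma rseq_zero : h.rseq fb bsel s0 0 = h.monoL s0 := rfl

lemma rseq_succ (m : ℕ) :
    h.rseq fb bsel s0 (m + 1) =
      h.rseq fb bsel s0 m -
        h.corr fb bsel (h.rseq fb bsel s0 m) (degz s0 + m) := rfl

lemma coeff_corr (y : L) (d : ℤ) (t : Fin n → ℤ) :
    h.coeff (h.corr fb bsel y d) t = ∑ s ∈ h.sliceF y d,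
      (h.coeff y s * (Q.zweight (s - bsel s) (bsel s))⁻¹) *
        (Q.zweight (s - bsel s) (t - (s - bsel s)) *
          h.coeff (fb (bsel s)) (t - (s - bsel s))) := by
  unfold corr
  rw [map_sum, Finset.sum_apply]
  refine Finset.sum_congr rfl fun s _ => ?_
  rw [map_smul, Pi.smul_apply, smul_eq_mul, coeff_monoL_mul]

/-- Hypotheses on the generator family along a slice. -/
def sliceHyp (y : L) (d : ℤ) : Prop :=
  ∀ s ∈ h.sliceF y d, (∀ i, bsel s i ≤ s i) ∧ (∀ i, 0 ≤ bsel s i) ∧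
    h.coeff (fb (bsel s)) (bsel s) = 1 ∧
    ∀ v, h.coeff (fb (bsel s)) v ≠ 0 →
      (∀ i, 0 ≤ v i) ∧ (v = bsel s ∨ degz (bsel s) < degz v)

variable {fb bsel s0}

lemma corr_term_ne_zero {y : L} {d : ℤ} (hs' : h.sliceHyp fb bsel y d)
    {s : Fin n → ℤ} (hs : s ∈ h.sliceF y d) {t : Fin n → ℤ}
    (hne : (h.coeff y s * (Q.zweight (s - bsel s) (bsel s))⁻¹) *
        (Q.zweight (s - bsel s) (t - (s - bsel s)) *
          h.coeff (fb (bsel s)) (t - (s - bsel s))) ≠ 0) :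
    (∀ i, 0 ≤ t i) ∧ d ≤ degz t ∧ (degz t = d → t = s) := by
  obtain ⟨hble, hbnn, _hb1, hsupp⟩ := hs' s hs
  obtain ⟨hysne, hsnn, hsd⟩ := h.mem_sliceF.1 hs
  have hv : h.coeff (fb (bsel s)) (t - (s - bsel s)) ≠ 0 := by
    intro h0
    rw [h0, mul_zero, mul_zero] at hne
    exact hne rfl
  obtain ⟨hvnn, hvcases⟩ := hsupp _ hv
  have hteq : t = (s - bsel s) + (t - (s - bsel s)) := by abel
  have htnn : ∀ i, 0 ≤ t i := by
    intro i
    have : t i = (s i - bsel s i) + (t - (s - bsel s)) i := by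
      rw [hteq]; simp [Pi.add_apply, Pi.sub_apply]
    rw [this]
    have := hble i
    have := hvnn i
    omega
  have hdegt : degz t = (degz s - degz (bsel s)) + degz (t - (s - bsel s)) := by
    conv_lhs => rw [hteq]
    rw [degz_add, degz_sub]
  refine ⟨htnn, ?_, ?_⟩
  · rcases hvcases with hveq | hvlt
    · rw [hveq] at hdegt
      omega
    · omega
  · intro hdt
    rcases hvcases with hveq | hvlt
    · rw [hteq, hveq]
      abel
    · omega

lemma coeff_corr_low {y : L} {d : ℤ} (hs' : h.sliceHyp fb bsel y d)
    {t : Fin n → ℤ} (hlow : degz t < d ∨ ¬(∀ i, 0 ≤ t i)) :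
    h.coeff (h.corr fb bsel y d) t = 0 := by
  rw [coeff_corr]
  refine Finset.sum_eq_zero fun s hs => ?_
  by_contra hne
  obtain ⟨htnn, hdle, _⟩ := h.corr_term_ne_zero hs' hs hne
  rcases hlow with hl | hl
  · omega
  · exact hl htnn

lemma coeff_corr_eq {y : L} {d : ℤ} (hs' : h.sliceHyp fb bsel y d)
    {t : Fin n → ℤ} (htnn : ∀ i, 0 ≤ t i) (hdt : degz t = d) :
    h.coeff (h.corr fb bsel y d) t = h.coeff y t := by
  rw [coeff_corr]
  by_cases hty : h.coeff y t = 0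
  · rw [hty]
    refine Finset.sum_eq_zero fun s hs => ?_
    by_contra hne
    obtain ⟨_, _, heq⟩ := h.corr_term_ne_zero hs' hs hne
    have hts : t = s := heq hdt
    obtain ⟨hysne, _, _⟩ := h.mem_sliceF.1 hs
    rw [← hts] at hysne
    exact hysne hty
  · have htmem : t ∈ h.sliceF y d := h.mem_sliceF.2 ⟨hty, htnn, hdt⟩
    rw [Finset.sum_eq_single_of_mem t htmem]
    · obtain ⟨_, _, hb1, _⟩ := hs' t htmem
      rw [sub_sub_cancel, hb1, mul_one, mul_assoc,
        inv_mul_cancel₀ (zweight_ne_zero (Q := Q) _ _), mul_one]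
    · intro s hs hst
      by_contra hne
      obtain ⟨_, _, heq⟩ := h.corr_term_ne_zero hs' hs hne
      exact hst (heq hdt).symm

lemma corr_mem_setS {P : TwoSidedIdeal L} {y : L} {d : ℤ}
    (hfbS : ∀ s ∈ h.sliceF y d, fb (bsel s) ∈ h.setS P) :
    h.corr fb bsel y d ∈ h.setS P := by
  refine setS_sum _ _ fun s hs => ?_
  exact setS_smul _ (setS_mul_left _ (hfbS s hs))

end IsQLaurentSeriesRing
namespace IsQLaurentSeriesRing
set_option linter.unusedSectionVars false
variable {k : Type*} [Field k] [Infinite k] {n : ℕ} {Q : QMatrix k n}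
variable {L : Type*} [Ring L] [Algebra k L] {h : IsQLaurentSeriesRing Q L}
variable {fb : (Fin n → ℤ) → L} {bsel : (Fin n → ℤ) → Fin n → ℤ} {s0 : Fin n → ℤ}
variable {P : TwoSidedIdeal L} {B : Finset (Fin n → ℤ)}

/-- The hypotheses on the selection function and the generator family. -/
def selHyp (h : IsQLaurentSeriesRing Q L) (fb : (Fin n → ℤ) → L)
    (bsel : (Fin n → ℤ) → Fin n → ℤ) (P : TwoSidedIdeal L)
    (B : Finset (Fin n → ℤ)) : Prop :=
  ∀ t ∈ h.setT P, bsel t ∈ B ∧ (∀ i, 0 ≤ bsel t i) ∧ (∀ i, bsel t i ≤ t i) ∧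
    fb (bsel t) ∈ h.setS P ∧ h.coeff (fb (bsel t)) (bsel t) = 1 ∧
    ∀ v, h.coeff (fb (bsel t)) v ≠ 0 →
      (∀ i, 0 ≤ v i) ∧ (v = bsel t ∨ degz (bsel t) < degz v)

lemma slice_subset_setT (HT : s0 ∈ h.setT P) (m : ℕ)
    (hA : ∀ t, h.coeff (h.rseq fb bsel s0 m) t ≠ 0 →
      (∀ i, 0 ≤ t i) ∧ degz s0 + m ≤ degz t)
    (hB : h.monoL s0 - h.rseq fb bsel s0 m ∈ h.setS P) :
    ∀ s ∈ h.sliceF (h.rseq fb bsel s0 m) (degz s0 + m), s ∈ h.setT P := by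
  intro s hs
  obtain ⟨hsc, hsnn, hsd⟩ := h.mem_sliceF.1 hs
  obtain ⟨gM, hgMS, hgMnn, hgM1, hgMsupp⟩ := setT_witness HT (degz s0 + m)
  set r := h.rseq fb bsel s0 m with hr
  set y := gM - (h.monoL s0 - r) with hy
  have hyS : y ∈ h.setS P := setS_sub hgMS hB
  have hyc : ∀ t, h.coeff y t =
      h.coeff r t + (h.coeff gM t - (if t = s0 then 1 else 0)) := by
    intro t
    rw [hy]
    simp only [map_sub, Pi.sub_apply, coeff_monoL]
    ring
  have hcase : ∀ t, h.coeff y t ≠ 0 → (∀ i, 0 ≤ t i) ∧ degz s0 + m ≤ degz t := by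
    intro t hyt
    by_cases hrt : h.coeff r t = 0
    · by_cases hts0 : t = s0
      · exfalso
        apply hyt
        rw [hyc, hrt, hts0, if_pos rfl, hgM1, sub_self, add_zero]
      · have hgt : h.coeff gM t ≠ 0 := by
          intro h0
          apply hyt
          rw [hyc, hrt, h0, if_neg hts0, sub_zero, add_zero]
        rcases hgMsupp t hgt with h1 | h1
        · exact absurd h1 hts0
        · exact ⟨hgMnn t hgt, le_of_lt h1⟩
    · exact hA t hrt
  have hys : h.coeff y s = h.coeff r s := by
    by_cases hts0 : s = s0
    · rw [hyc, hts0, if_pos rfl, hgM1, sub_self, add_zero]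
    · have hgs : h.coeff gM s = 0 := by
        by_contra h0
        rcases hgMsupp s h0 with h1 | h1
        · exact hts0 h1
        · omega
      rw [hyc, hgs, if_neg hts0]
      ring
  refine ⟨hsnn, y, hyS, fun t ht => (hcase t ht).1, by rw [hys]; exact hsc,
    fun t ht => ?_⟩
  rw [hsd]
  exact (hcase t ht).2

lemma inv_all (HT : s0 ∈ h.setT P) (Hsel : selHyp h fb bsel P B) (m : ℕ) :
    (∀ t, h.coeff (h.rseq fb bsel s0 m) t ≠ 0 →
      (∀ i, 0 ≤ t i) ∧ degz s0 + m ≤ degz t) ∧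
      h.monoL s0 - h.rseq fb bsel s0 m ∈ h.setS P := by
  induction m with
  | zero =>
      constructor
      · intro t ht
        rw [rseq_zero] at ht
        have := congrFun (h.coeff_monoL s0) t
        rw [this] at ht
        by_cases hts : t = s0
        · subst hts
          exact ⟨HT.1, by push_cast; omega⟩
        · rw [if_neg hts] at ht
          exact absurd rfl ht
      · rw [rseq_zero, sub_self]
        exact setS_zero
  | succ m ih =>
      obtain ⟨hA, hB⟩ := ih
      have hsliceT := slice_subset_setT HT m hA hB
      have hhyp : h.sliceHyp fb bsel (h.rseq fb bsel s0 m) (degz s0 + m) := by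
        intro s hs
        obtain ⟨_, hnn, hle, _, h1, hsupp⟩ := Hsel s (hsliceT s hs)
        exact ⟨hle, hnn, h1, hsupp⟩
      have hfbS : ∀ s ∈ h.sliceF (h.rseq fb bsel s0 m) (degz s0 + m),
          fb (bsel s) ∈ h.setS P := by
        intro s hs
        obtain ⟨_, _, _, hS, _, _⟩ := Hsel s (hsliceT s hs)
        exact hS
      constructor
      · intro t ht
        rw [rseq_succ, map_sub, Pi.sub_apply] at ht
        by_cases htnn : ∀ i, 0 ≤ t i
        · by_cases hdeg : degz t < degz s0 + m
          · exfalso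
            have h1 : h.coeff (h.rseq fb bsel s0 m) t = 0 := by
              by_contra hc
              have := (hA t hc).2
              omega
            rw [h1, h.coeff_corr_low hhyp (Or.inl hdeg), sub_self] at ht
            exact ht rfl
          · refine ⟨htnn, ?_⟩
            by_cases hdeq : degz t = degz s0 + m
            · exfalso
              rw [h.coeff_corr_eq hhyp htnn hdeq, sub_self] at ht
              exact ht rfl
            · push_cast
              omega
        · exfalso
          have h1 : h.coeff (h.rseq fb bsel s0 m) t = 0 := by
            by_contra hc
            exact htnn (hA t hc).1
          rw [h1, h.coeff_corr_low hhyp (Or.inr htnn), sub_self] at ht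
          exact ht rfl
      · rw [rseq_succ]
        have heq : h.monoL s0 - (h.rseq fb bsel s0 m -
            h.corr fb bsel (h.rseq fb bsel s0 m) (degz s0 + m)) =
            (h.monoL s0 - h.rseq fb bsel s0 m) +
              h.corr fb bsel (h.rseq fb bsel s0 m) (degz s0 + m) := by
          abel
        rw [heq]
        exact setS_add hB (h.corr_mem_setS hfbS)

end IsQLaurentSeriesRing
namespace IsQLaurentSeriesRing
set_option linter.unusedSectionVars false
variable {k : Type*} [Field k] [Infinite k] {n : ℕ} {Q : QMatrix k n}
variable {L : Type*} [Ring L] [Algebra k L] (h : IsQLaurentSeriesRing Q L)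
variable (fb : (Fin n → ℤ) → L) (bsel : (Fin n → ℤ) → Fin n → ℤ) (s0 : Fin n → ℤ)

open Classical in
/-- The coefficient family of the limit multiplier attached to the generator `fb b`. -/
def alphaf (b u : Fin n → ℤ) : k :=
  if (∀ i, 0 ≤ u i) ∧ degz s0 ≤ degz u + degz b ∧ bsel (u + b) = b then
    h.coeff (h.rseq fb bsel s0 ((degz u + degz b - degz s0).toNat)) (u + b) *
      (Q.zweight u b)⁻¹
  else 0

lemma alphaf_bounded (b : Fin n → ℤ) : LaurentBounded (h.alphaf fb bsel s0 b) := by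
  refine ⟨0, fun u hu => ?_⟩
  obtain ⟨i, hi⟩ := hu
  unfold alphaf
  rw [if_neg]
  rintro ⟨hnn, -, -⟩
  have := hnn i
  omega

/-- The limit multiplier attached to the generator `fb b`. -/
def alim (b : Fin n → ℤ) : L :=
  Classical.choose (h.coeff_surjective _ (h.alphaf_bounded fb bsel s0 b))

lemma coeff_alim (b : Fin n → ℤ) :
    h.coeff (h.alim fb bsel s0 b) = h.alphaf fb bsel s0 b :=
  Classical.choose_spec (h.coeff_surjective _ (h.alphaf_bounded fb bsel s0 b))

/-- Partial multiplier: the part of `alim b` of monomials of degree `< degz s0 + m - degz b`. -/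
def APel (m : ℕ) (b : Fin n → ℤ) : L :=
  ∑ u ∈ (finite_nn_deg_le (n := n) (degz s0 + m - 1 - degz b)).toFinset,
    h.alphaf fb bsel s0 b u • h.monoL u

lemma coeff_APel (m : ℕ) (b t : Fin n → ℤ) :
    h.coeff (h.APel fb bsel s0 m b) t =
      if degz t + degz b < degz s0 + m then h.alphaf fb bsel s0 b t else 0 := by
  unfold APel
  rw [map_sum, Finset.sum_apply]
  have hterm : ∀ u ∈ (finite_nn_deg_le (n := n) (degz s0 + m - 1 - degz b)).toFinset,
      h.coeff (h.alphaf fb bsel s0 b u • h.monoL u) t =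
        if t = u then h.alphaf fb bsel s0 b u else 0 := by
    intro u _
    rw [map_smul, Pi.smul_apply, smul_eq_mul]
    have := congrFun (h.coeff_monoL u) t
    rw [this]
    by_cases htu : t = u
    · rw [if_pos htu, if_pos htu, mul_one]
    · rw [if_neg htu, if_neg htu, mul_zero]
  rw [Finset.sum_congr rfl hterm, Finset.sum_ite_eq]
  by_cases hnn : ∀ i, 0 ≤ t i
  · by_cases hc : degz t + degz b < degz s0 + m
    · rw [if_pos, if_pos hc]
      rw [Set.Finite.mem_toFinset]
      exact ⟨hnn, by omega⟩
    · rw [if_neg, if_neg hc]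
      rw [Set.Finite.mem_toFinset]
      rintro ⟨-, hle⟩
      omega
  · have hz : h.alphaf fb bsel s0 b t = 0 := by
      unfold alphaf
      rw [if_neg]
      rintro ⟨hnn', -, -⟩
      exact hnn hnn'
    rw [hz]
    simp

lemma coeff_alim_sub_APel (m : ℕ) (b t : Fin n → ℤ) :
    h.coeff (h.alim fb bsel s0 b - h.APel fb bsel s0 m b) t =
      if degz s0 + m ≤ degz t + degz b then h.alphaf fb bsel s0 b t else 0 := by
  rw [map_sub, Pi.sub_apply, coeff_alim, coeff_APel]
  by_cases hc : degz t + degz b < degz s0 + m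
  · rw [if_pos hc, if_neg (by omega), sub_self]
  · rw [if_neg hc, if_pos (by omega), sub_zero]

variable {h fb bsel s0}
variable {P : TwoSidedIdeal L} {B : Finset (Fin n → ℤ)}

lemma alphaf_nn {b u : Fin n → ℤ} (hne : h.alphaf fb bsel s0 b u ≠ 0) :
    (∀ i, 0 ≤ u i) ∧ degz s0 ≤ degz u + degz b ∧ bsel (u + b) = b := by
  by_contra hc
  apply hne
  unfold alphaf
  rw [if_neg hc]

lemma p1_key (HT : s0 ∈ h.setT P) (Hsel : selHyp h fb bsel P B)
    (HBset : ↑B ⊆ h.setT P) (m : ℕ) {b : Fin n → ℤ} (hb : b ∈ B) :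
    h.APel fb bsel s0 (m + 1) b - h.APel fb bsel s0 m b =
      ∑ s ∈ (h.sliceF (h.rseq fb bsel s0 m) (degz s0 + m)).filter
          (fun s => bsel s = b),
        (h.coeff (h.rseq fb bsel s0 m) s * (Q.zweight (s - b) b)⁻¹) •
          h.monoL (s - b) := by
  have hAB := inv_all HT Hsel m
  have hsliceT := slice_subset_setT HT m hAB.1 hAB.2
  have hbnn : ∀ i, 0 ≤ b i := (HBset hb).1
  apply h.coeff_injective
  funext u
  -- LHS
  have hlhs : h.coeff (h.APel fb bsel s0 (m + 1) b - h.APel fb bsel s0 m b) u =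
      if degz u + degz b = degz s0 + m then h.alphaf fb bsel s0 b u else 0 := by
    rw [map_sub, Pi.sub_apply, coeff_APel, coeff_APel]
    by_cases hc : degz u + degz b = degz s0 + m
    · rw [if_pos (by push_cast; omega), if_neg (by omega), sub_zero, if_pos hc]
    · by_cases hc2 : degz u + degz b < degz s0 + m
      · rw [if_pos (by push_cast; omega), if_pos hc2, sub_self, if_neg hc]
      · rw [if_neg (by push_cast; omega), if_neg (by omega), sub_self, if_neg hc]
  rw [hlhs]
  -- RHS
  have hrhs : h.coeff (∑ s ∈ (h.sliceF (h.rseq fb bsel s0 m) (degz s0 + m)).filter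
      (fun s => bsel s = b),
      (h.coeff (h.rseq fb bsel s0 m) s * (Q.zweight (s - b) b)⁻¹) •
        h.monoL (s - b)) u =
      if (u + b) ∈ (h.sliceF (h.rseq fb bsel s0 m) (degz s0 + m)).filter
          (fun s => bsel s = b) then
        h.coeff (h.rseq fb bsel s0 m) (u + b) * (Q.zweight u b)⁻¹ else 0 := by
    rw [map_sum, Finset.sum_apply]
    have hterm : ∀ s ∈ (h.sliceF (h.rseq fb bsel s0 m) (degz s0 + m)).filter
        (fun s => bsel s = b),
        h.coeff ((h.coeff (h.rseq fb bsel s0 m) s * (Q.zweight (s - b) b)⁻¹) •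
          h.monoL (s - b)) u =
          if s = u + b then h.coeff (h.rseq fb bsel s0 m) (u + b) *
            (Q.zweight u b)⁻¹ else 0 := by
      intro s _
      rw [map_smul, Pi.smul_apply, smul_eq_mul]
      have := congrFun (h.coeff_monoL (s - b)) u
      rw [this]
      by_cases hsu : s = u + b
      · rw [if_pos hsu, if_pos (by rw [hsu, add_sub_cancel_right]), mul_one, hsu,
          add_sub_cancel_right]
      · rw [if_neg, if_neg hsu, mul_zero]
        intro hc
        apply hsu
        rw [hc]
        abel
    rw [Finset.sum_congr rfl hterm]
    by_cases hmem : (u + b) ∈ (h.sliceF (h.rseq fb bsel s0 m) (degz s0 + m)).filter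
        (fun s => bsel s = b)
    · rw [if_pos hmem, Finset.sum_eq_single_of_mem (u + b) hmem (fun s _ hs => if_neg hs),
        if_pos rfl]
    · rw [if_neg hmem]
      refine Finset.sum_eq_zero fun s hs => ?_
      rw [if_neg]
      intro hc
      rw [hc] at hs
      exact hmem hs
  rw [hrhs]
  -- compare the two sides
  by_cases hc : degz u + degz b = degz s0 + m
  · rw [if_pos hc]
    have htoNat : (degz u + degz b - degz s0).toNat = m := by omega
    by_cases hcond : (∀ i, 0 ≤ u i) ∧ degz s0 ≤ degz u + degz b ∧ bsel (u + b) = b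
    · have halpha : h.alphaf fb bsel s0 b u =
          h.coeff (h.rseq fb bsel s0 m) (u + b) * (Q.zweight u b)⁻¹ := by
        unfold alphaf
        rw [if_pos hcond, htoNat]
      rw [halpha]
      by_cases hmem : (u + b) ∈ (h.sliceF (h.rseq fb bsel s0 m) (degz s0 + m)).filter
          (fun s => bsel s = b)
      · rw [if_pos hmem]
      · rw [if_neg hmem]
        have hzero : h.coeff (h.rseq fb bsel s0 m) (u + b) = 0 := by
          by_contra hnz
          apply hmem
          rw [Finset.mem_filter]
          refine ⟨h.mem_sliceF.2 ⟨hnz, ?_, ?_⟩, hcond.2.2⟩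
          · intro i
            have := hcond.1 i
            have := hbnn i
            simp only [Pi.add_apply]
            omega
          · rw [degz_add]
            exact hc
        rw [hzero, zero_mul]
    · have halpha : h.alphaf fb bsel s0 b u = 0 := by
        unfold alphaf
        rw [if_neg hcond]
      rw [halpha, if_neg]
      intro hmem
      apply hcond
      rw [Finset.mem_filter] at hmem
      obtain ⟨hslice, hbsel⟩ := hmem
      have hT := hsliceT _ hslice
      obtain ⟨-, -, hble, -, -, -⟩ := Hsel _ hT
      rw [hbsel] at hble
      refine ⟨fun i => ?_, by omega, hbsel⟩
      have := hble i
      simp only [Pi.add_apply] at this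
      omega
  · rw [if_neg hc, if_neg]
    intro hmem
    rw [Finset.mem_filter] at hmem
    obtain ⟨hslice, -⟩ := hmem
    obtain ⟨-, -, hdeg⟩ := h.mem_sliceF.1 hslice
    rw [degz_add] at hdeg
    exact hc hdeg

lemma p1 (HT : s0 ∈ h.setT P) (Hsel : selHyp h fb bsel P B)
    (HBset : ↑B ⊆ h.setT P) (m : ℕ) :
    h.monoL s0 - h.rseq fb bsel s0 m = ∑ b ∈ B, h.APel fb bsel s0 m b * fb b := by
  induction m with
  | zero =>
      rw [rseq_zero, sub_self]
      symm
      refine Finset.sum_eq_zero fun b hb => ?_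
      have hz : h.APel fb bsel s0 0 b = 0 := by
        apply h.coeff_injective
        funext t
        rw [coeff_APel, map_zero]
        show _ = (0 : k)
        by_cases hc : degz t + degz b < degz s0 + (0 : ℕ)
        · rw [if_pos hc]
          unfold alphaf
          rw [if_neg]
          rintro ⟨-, hle, -⟩
          push_cast at hc
          omega
        · rw [if_neg hc]
      rw [hz, zero_mul]
  | succ m ih =>
      have hAB := inv_all HT Hsel m
      have hsliceT := slice_subset_setT HT m hAB.1 hAB.2
      have hstep : h.monoL s0 - h.rseq fb bsel s0 (m + 1) =
          (h.monoL s0 - h.rseq fb bsel s0 m) +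
            h.corr fb bsel (h.rseq fb bsel s0 m) (degz s0 + m) := by
        rw [rseq_succ]
        abel
      rw [hstep, ih]
      have hsum : ∑ b ∈ B, h.APel fb bsel s0 (m + 1) b * fb b =
          ∑ b ∈ B, h.APel fb bsel s0 m b * fb b +
            ∑ b ∈ B, (h.APel fb bsel s0 (m + 1) b - h.APel fb bsel s0 m b) * fb b := by
        rw [← Finset.sum_add_distrib]
        refine Finset.sum_congr rfl fun b _ => ?_
        rw [sub_mul]
        abel
      rw [hsum]
      congr 1
      -- corr = ∑_b (APel (m+1) b - APel m b) * fb b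
      have hkey : ∀ b ∈ B, (h.APel fb bsel s0 (m + 1) b - h.APel fb bsel s0 m b) * fb b =
          ∑ s ∈ (h.sliceF (h.rseq fb bsel s0 m) (degz s0 + m)).filter
              (fun s => bsel s = b),
            (h.coeff (h.rseq fb bsel s0 m) s * (Q.zweight (s - bsel s) (bsel s))⁻¹) •
              (h.monoL (s - bsel s) * fb (bsel s)) := by
        intro b hb
        rw [p1_key HT Hsel HBset m hb, Finset.sum_mul]
        refine Finset.sum_congr rfl fun s hs => ?_
        have hbs : bsel s = b := (Finset.mem_filter.1 hs).2
        rw [smul_mul_assoc, hbs]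
      rw [Finset.sum_congr rfl hkey]
      unfold corr
      rw [Finset.sum_fiberwise_of_maps_to]
      intro s hs
      obtain ⟨hbB, -⟩ := Hsel s (hsliceT s hs)
      exact hbB

end IsQLaurentSeriesRing
namespace IsQLaurentSeriesRing
set_option linter.unusedSectionVars false
variable {k : Type*} [Field k] [Infinite k] {n : ℕ} {Q : QMatrix k n}
variable {L : Type*} [Ring L] [Algebra k L] {h : IsQLaurentSeriesRing Q L}
variable {fb : (Fin n → ℤ) → L} {bsel : (Fin n → ℤ) → Fin n → ℤ} {s0 : Fin n → ℤ}
variable {P : TwoSidedIdeal L} {B : Finset (Fin n → ℤ)}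

lemma main_identity (HT : s0 ∈ h.setT P) (Hsel : selHyp h fb bsel P B)
    (HBset : ↑B ⊆ h.setT P)
    (Hfb_supp : ∀ b ∈ B, ∀ v, h.coeff (fb b) v ≠ 0 →
      (∀ i, 0 ≤ v i) ∧ (v = b ∨ degz b < degz v)) :
    h.monoL s0 = ∑ b ∈ B, h.alim fb bsel s0 b * fb b := by
  apply h.coeff_injective
  funext t
  set m := (degz t + 1 - degz s0).toNat with hm
  have hmlt : degz t < degz s0 + (m : ℤ) := by
    have h1 := Int.self_le_toNat (degz t + 1 - degz s0)
    omega
  have hsplit : ∑ b ∈ B, h.alim fb bsel s0 b * fb b =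
      (∑ b ∈ B, h.APel fb bsel s0 m b * fb b) +
        ∑ b ∈ B, (h.alim fb bsel s0 b - h.APel fb bsel s0 m b) * fb b := by
    rw [← Finset.sum_add_distrib]
    refine Finset.sum_congr rfl fun b _ => ?_
    rw [sub_mul]
    abel
  rw [hsplit, map_add, Pi.add_apply]
  have h2 : h.coeff (∑ b ∈ B,
      (h.alim fb bsel s0 b - h.APel fb bsel s0 m b) * fb b) t = 0 := by
    rw [map_sum, Finset.sum_apply]
    refine Finset.sum_eq_zero fun b hb => ?_
    rw [h.coeff_mul]
    have hz : ∀ u, h.coeff (h.alim fb bsel s0 b - h.APel fb bsel s0 m b) u *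
        h.coeff (fb b) (t - u) * Q.zweight u (t - u) = 0 := by
      intro u
      by_cases h4 : h.coeff (h.alim fb bsel s0 b - h.APel fb bsel s0 m b) u = 0
      · rw [h4, zero_mul, zero_mul]
      · by_cases h5 : h.coeff (fb b) (t - u) = 0
        · rw [h5, mul_zero, zero_mul]
        · exfalso
          rw [coeff_alim_sub_APel] at h4
          have hcond : degz s0 + (m : ℤ) ≤ degz u + degz b ∧
              h.alphaf fb bsel s0 b u ≠ 0 := by
            by_cases hc : degz s0 + (m : ℤ) ≤ degz u + degz b
            · refine ⟨hc, ?_⟩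
              rwa [if_pos hc] at h4
            · rw [if_neg hc] at h4
              exact absurd rfl h4
          obtain ⟨hle, hane⟩ := hcond
          obtain ⟨hvnn, hvcase⟩ := Hfb_supp b hb _ h5
          have hdegv : degz b ≤ degz (t - u) := by
            rcases hvcase with he | hlt
            · rw [he]
            · exact le_of_lt hlt
          have hdt : degz t = degz u + degz (t - u) := by
            have huv : u + (t - u) = t := by abel
            conv_lhs => rw [← huv]
            rw [degz_add]
          omega
    rw [finsum_congr hz, finsum_zero]
  rw [h2, add_zero]
  have h3 := p1 HT Hsel HBset (m := m)
  have h6 : h.coeff (h.rseq fb bsel s0 m) t = 0 := by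
    by_contra hc
    have := ((inv_all HT Hsel m).1 t hc).2
    omega
  have h7 := congrFun (congrArg h.coeff h3) t
  rw [map_sub, Pi.sub_apply, h6, sub_zero] at h7
  exact h7

/-- The main lemma: if `P` is a proper two-sided ideal, no nonzero `f` can have all
its torus twists inside `P`; equivalently, if some nonzero `f` does, then `1 ∈ P`. -/
lemma one_mem_of_setS (P : TwoSidedIdeal L) {f : L} (hfS : f ∈ h.setS P)
    (hf0 : f ≠ 0) : (1 : L) ∈ P := by
  classical
  obtain ⟨N, hN⟩ := h.coeff_bounded f
  set c : Fin n → ℤ := fun _ => (N : ℤ) with hc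
  set g := h.monoL c * f with hg
  have hgS : g ∈ h.setS P := setS_mul_left _ hfS
  have hgc : ∀ t, h.coeff g t = Q.zweight c (t - c) * h.coeff f (t - c) :=
    fun t => h.coeff_monoL_mul c f t
  have hgnn : ∀ t, h.coeff g t ≠ 0 → ∀ i, 0 ≤ t i := by
    intro t ht i
    by_contra hi
    apply ht
    rw [hgc]
    have hsub : (t - c) i = t i - (N : ℤ) := rfl
    rw [hN _ ⟨i, by rw [hsub]; omega⟩, mul_zero]
  have hg0 : g ≠ 0 := by
    obtain ⟨s₁, hs₁⟩ := h.exists_coeff_ne_zero hf0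
    intro h0
    apply hs₁
    have hgc1 := hgc (s₁ + c)
    rw [h0, map_zero, add_sub_cancel_right] at hgc1
    have := zweight_ne_zero (Q := Q) c s₁
    exact (mul_eq_zero.1 hgc1.symm).resolve_left this
  obtain ⟨s0, hs0c, hs0min⟩ := h.exists_min_support hg0 hgnn
  have HT : s0 ∈ h.setT P := ⟨hgnn s0 hs0c, g, hgS, hgnn, hs0c, hs0min⟩
  obtain ⟨B, hBsub, hBdom⟩ := exists_min_basis_int (h.setT P) (fun t ht => ht.1)
  have hgen : ∀ b : Fin n → ℤ, ∃ gb : L, b ∈ h.setT P →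
      gb ∈ h.setS P ∧ (∀ s, h.coeff gb s ≠ 0 → ∀ i, 0 ≤ s i) ∧ h.coeff gb b = 1 ∧
        ∀ s, h.coeff gb s ≠ 0 → s = b ∨ degz b < degz s := by
    intro b
    by_cases hb : b ∈ h.setT P
    · obtain ⟨gb, h1, h2, h3, h4⟩ := setT_witness hb (degz b)
      exact ⟨gb, fun _ => ⟨h1, h2, h3, h4⟩⟩
    · exact ⟨0, fun hcc => absurd hcc hb⟩
  choose fb hfb using hgen
  have hsel0 : ∀ t : Fin n → ℤ, ∃ b : Fin n → ℤ, t ∈ h.setT P →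
      b ∈ B ∧ ∀ i, b i ≤ t i := by
    intro t
    by_cases ht : t ∈ h.setT P
    · obtain ⟨b, hbB, hble⟩ := hBdom t ht
      exact ⟨b, fun _ => ⟨hbB, hble⟩⟩
    · exact ⟨t, fun hcc => absurd hcc ht⟩
  choose bsel hbsel using hsel0
  have Hsel : selHyp h fb bsel P B := by
    intro t ht
    obtain ⟨hbB, hble⟩ := hbsel t ht
    have hbT : bsel t ∈ h.setT P := hBsub hbB
    obtain ⟨h1, h2, h3, h4⟩ := hfb (bsel t) hbT
    exact ⟨hbB, hbT.1, hble, h1, h3, fun v hv => ⟨h2 v hv, h4 v hv⟩⟩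
  have Hfb_supp : ∀ b ∈ B, ∀ v, h.coeff (fb b) v ≠ 0 →
      (∀ i, 0 ≤ v i) ∧ (v = b ∨ degz b < degz v) := by
    intro b hb v hv
    obtain ⟨h1, h2, h3, h4⟩ := hfb b (hBsub hb)
    exact ⟨h2 v hv, h4 v hv⟩
  have hmain := main_identity HT Hsel hBsub Hfb_supp
  have hs0S : h.monoL s0 ∈ h.setS P := by
    rw [hmain]
    refine setS_sum _ _ fun b hb => ?_
    obtain ⟨h1, _, _, _⟩ := hfb b (hBsub hb)
    exact setS_mul_left _ h1
  have hs0P : h.monoL s0 ∈ P := setS_subset hs0S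
  have hprod : h.monoL s0 * h.monoL (-s0) ∈ P := P.mul_mem_right _ _ hs0P
  rw [monoL_mul_monoL] at hprod
  have hzero : s0 + (-s0) = (0 : Fin n → ℤ) := by abel
  rw [hzero, monoL_zero] at hprod
  have h1 : ((Q.zweight s0 (-s0))⁻¹ : k) • (Q.zweight s0 (-s0) • (1 : L)) ∈ P := by
    rw [Algebra.smul_def]
    exact P.mul_mem_left _ _ hprod
  rwa [smul_smul, inv_mul_cancel₀ (zweight_ne_zero (Q := Q) _ _), one_smul] at h1

end IsQLaurentSeriesRing
/-- Assume `k` is infinite. For every prime two-sided ideal `P` of `L`,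
the intersection `⋂_{θ∈H} θ(P)` of the `H`-orbit of `P` equals the zero ideal. -/
theorem stmt_7 {k : Type*} [Field k] [Infinite k] {n : ℕ} (hn : 0 < n) (Q : QMatrix k n)
    (L : Type*) [Ring L] [Algebra k L] (h : IsQLaurentSeriesRing Q L)
    (P : TwoSidedIdeal L) (hP : IsPrimeTwoSided P) :
    (⋂ θ : Fin n → kˣ, h.hAct θ '' (P : Set L)) = {0} := by
  ext x
  simp only [Set.mem_iInter, Set.mem_singleton_iff]
  constructor
  · intro hx
    by_contra hx0
    have hxS : x ∈ h.setS P := by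
      intro θ
      obtain ⟨p, hpP, hpe⟩ := hx θ⁻¹
      have hxp : h.hAct θ x = p := by
        rw [← hpe, IsQLaurentSeriesRing.hAct_hAct, mul_inv_cancel,
          IsQLaurentSeriesRing.hAct_one]
      rw [hxp]
      exact hpP
    have h1P : (1 : L) ∈ P := IsQLaurentSeriesRing.one_mem_of_setS P hxS hx0
    apply hP.1
    have hall : ∀ y : L, y ∈ P := by
      intro y
      have := P.mul_mem_left y 1 h1P
      rwa [mul_one] at this
    refine eq_top_iff.2 fun y _ => hall y
  · intro hx θ
    rw [hx]
    exact ⟨0, P.zero_mem, IsQLaurentSeriesRing.hAct_zero h θ⟩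

end
end

section
/- Assume k is infinite. Then the Jacobson radical of the q-commutative Laurent series ring L is zero. -/
/-!
Common setup: `q`-commutative power series ring `R = k_q[[x_1,…,x_n]]` and
`q`-commutative Laurent series ring `L = k_q[[x_1^{±1},…,x_n^{±1}]]`, characterized
by their coefficient descriptions (twisted convolution multiplication).
-/

noncomputable section

/-! ### Auxiliary material for Statement 8 -/

section Stmt8Aux

open Function

variable {k : Type*} [Field k] {n : ℕ} {Q : QMatrix k n}
variable {L : Type*} [Ring L] [Algebra k L]

lemma stmt8_zweight_snd_zero (Q : QMatrix k n) (u : Fin n → ℤ) : Q.zweight u 0 = 1 := by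
  unfold QMatrix.zweight
  simp

lemma stmt8_zweight_fst_zero (Q : QMatrix k n) (v : Fin n → ℤ) : Q.zweight 0 v = 1 := by
  unfold QMatrix.zweight
  simp

lemma stmt8_zweight_ne_zero (Q : QMatrix k n) (u v : Fin n → ℤ) : Q.zweight u v ≠ 0 := by
  unfold QMatrix.zweight
  refine Finset.prod_ne_zero_iff.mpr fun i _ => Finset.prod_ne_zero_iff.mpr fun j _ => ?_
  split
  · exact zpow_ne_zero _ (Q.q_ne_zero i j)
  · exact one_ne_zero

/-- The character of the torus associated to an exponent `s`. -/
def stmt8chi (θ : Fin n → kˣ) (s : Fin n → ℤ) : k := ∏ i, ((θ i ^ (s i) : kˣ) : k)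

lemma stmt8chi_add (θ : Fin n → kˣ) (u v : Fin n → ℤ) :
    stmt8chi θ (u + v) = stmt8chi θ u * stmt8chi θ v := by
  unfold stmt8chi
  rw [← Finset.prod_mul_distrib]
  refine Finset.prod_congr rfl fun i _ => ?_
  rw [Pi.add_apply, zpow_add, Units.val_mul]

lemma stmt8chi_zero (θ : Fin n → kˣ) : stmt8chi θ 0 = 1 := by
  unfold stmt8chi
  simp

lemma stmt8chi_mul_inv (θ : Fin n → kˣ) (s : Fin n → ℤ) :
    stmt8chi θ s * stmt8chi (fun i => (θ i)⁻¹) s = 1 := by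
  unfold stmt8chi
  rw [← Finset.prod_mul_distrib]
  refine Finset.prod_eq_one fun i _ => ?_
  rw [inv_zpow, ← Units.val_mul, mul_inv_cancel]
  rfl

end Stmt8Aux

section Stmt8Aux2

open Function

variable {k : Type*} [Field k] {n : ℕ} {Q : QMatrix k n}
variable {L : Type*} [Ring L] [Algebra k L] (h : IsQLaurentSeriesRing Q L)

lemma stmt8_coeff_hAct (θ : Fin n → kˣ) (f : L) (s : Fin n → ℤ) :
    h.coeff (h.hAct θ f) s = stmt8chi θ s * h.coeff f s := by
  have := Classical.choose_spec (h.coeff_surjective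
    (fun s => (∏ i, ((θ i ^ (s i) : kˣ) : k)) * h.coeff f s)
    (by
      obtain ⟨N, hN⟩ := h.coeff_bounded f
      exact ⟨N, fun s hs => by simp only []; rw [hN s hs, mul_zero]⟩))
  exact congrFun this s

lemma stmt8_hAct_one (θ : Fin n → kˣ) : h.hAct θ (1 : L) = 1 := by
  apply h.coeff_injective
  funext s
  rw [stmt8_coeff_hAct, h.coeff_one]
  by_cases hs : s = 0
  · subst hs; simp [stmt8chi_zero]
  · simp [hs]

lemma stmt8_hAct_add (θ : Fin n → kˣ) (f g : L) :
    h.hAct θ (f + g) = h.hAct θ f + h.hAct θ g := by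
  apply h.coeff_injective
  funext s
  rw [map_add, Pi.add_apply, stmt8_coeff_hAct, stmt8_coeff_hAct, stmt8_coeff_hAct, map_add,
    Pi.add_apply, mul_add]

lemma stmt8_hAct_mul (θ : Fin n → kˣ) (f g : L) :
    h.hAct θ (f * g) = h.hAct θ f * h.hAct θ g := by
  apply h.coeff_injective
  funext s
  rw [stmt8_coeff_hAct, h.coeff_mul, h.coeff_mul]
  have h2 : ∀ u, h.coeff (h.hAct θ f) u * h.coeff (h.hAct θ g) (s - u) * Q.zweight u (s - u)
      = stmt8chi θ s * (h.coeff f u * h.coeff g (s - u) * Q.zweight u (s - u)) := by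
    intro u
    rw [stmt8_coeff_hAct, stmt8_coeff_hAct]
    have hχ : stmt8chi θ u * stmt8chi θ (s - u) = stmt8chi θ s := by
      rw [← stmt8chi_add]
      congr 1
      abel
    calc stmt8chi θ u * h.coeff f u * (stmt8chi θ (s - u) * h.coeff g (s - u))
          * Q.zweight u (s - u)
        = (stmt8chi θ u * stmt8chi θ (s - u)) *
            (h.coeff f u * h.coeff g (s - u) * Q.zweight u (s - u)) := by ring
      _ = _ := by rw [hχ]
  rw [finsum_congr h2, ← mul_finsum _ _]

lemma stmt8_hAct_hAct_inv (θ : Fin n → kˣ) (y : L) :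
    h.hAct θ (h.hAct (fun i => (θ i)⁻¹) y) = y := by
  apply h.coeff_injective
  funext s
  rw [stmt8_coeff_hAct, stmt8_coeff_hAct, ← mul_assoc, stmt8chi_mul_inv, one_mul]

lemma stmt8_one_ne_zero (h : IsQLaurentSeriesRing Q L) : (1 : L) ≠ 0 := by
  intro h10
  have h1 := h.coeff_one 0
  rw [h10, map_zero] at h1
  simp at h1

lemma stmt8_hAct_mem_jacobson (θ : Fin n → kˣ) {a : L}
    (ha : a ∈ (⊥ : TwoSidedIdeal L).jacobson) :
    h.hAct θ a ∈ (⊥ : TwoSidedIdeal L).jacobson := by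
  rw [TwoSidedIdeal.mem_jacobson_iff] at ha ⊢
  intro y
  obtain ⟨z, hz⟩ := ha (h.hAct (fun i => (θ i)⁻¹) y)
  rw [TwoSidedIdeal.mem_bot] at hz
  refine ⟨h.hAct θ z, ?_⟩
  rw [TwoSidedIdeal.mem_bot]
  have e1 : z * h.hAct (fun i => (θ i)⁻¹) y * a + z = 1 := sub_eq_zero.mp hz
  have e2 := congrArg (h.hAct θ) e1
  rw [stmt8_hAct_add, stmt8_hAct_mul, stmt8_hAct_mul, stmt8_hAct_one,
    stmt8_hAct_hAct_inv] at e2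
  rw [e2]
  exact sub_self 1

end Stmt8Aux2

section Stmt8Aux3

open Function

variable {k : Type*} [Field k] {n : ℕ} {Q : QMatrix k n}
variable {L : Type*} [Ring L] [Algebra k L]

/-- Boundedness of the delta family. -/
lemma stmt8mono_bound (w : Fin n → ℤ) :
    LaurentBounded (fun t => if t = w then (1 : k) else 0) := by
  refine ⟨∑ i, (w i).natAbs, fun s hs => ?_⟩
  obtain ⟨i, hi⟩ := hs
  have hne : s ≠ w := by
    intro e
    have h1 : (w i).natAbs ≤ ∑ j, (w j).natAbs :=
      Finset.single_le_sum (f := fun j => (w j).natAbs) (fun j _ => Nat.zero_le _)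
        (Finset.mem_univ i)
    rw [e] at hi
    omega
  simp [hne]

/-- The monomial `x^w` in `L`. -/
noncomputable def stmt8mono (h : IsQLaurentSeriesRing Q L) (w : Fin n → ℤ) : L :=
  Classical.choose (h.coeff_surjective (fun t => if t = w then 1 else 0) (stmt8mono_bound w))

lemma stmt8_coeff_mono (h : IsQLaurentSeriesRing Q L) (w : Fin n → ℤ) (s : Fin n → ℤ) :
    h.coeff (stmt8mono h w) s = if s = w then 1 else 0 :=
  congrFun (Classical.choose_spec
    (h.coeff_surjective (fun t => if t = w then 1 else 0) (stmt8mono_bound w))) s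

/-- Normalization: any nonzero element of the Jacobson radical can be converted into one with
constant coefficient `1`. -/
lemma stmt8_exists_normalized (h : IsQLaurentSeriesRing Q L) {a : L}
    (ha : a ∈ (⊥ : TwoSidedIdeal L).jacobson) (hne : a ≠ 0) :
    ∃ b : L, b ∈ (⊥ : TwoSidedIdeal L).jacobson ∧ h.coeff b 0 = 1 := by
  have hca : h.coeff a ≠ 0 := by
    intro e
    exact hne (h.coeff_injective (by rw [e, map_zero]))
  obtain ⟨s₀, hs₀⟩ : ∃ s₀, h.coeff a s₀ ≠ 0 := by
    by_contra hc
    push_neg at hc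
    exact hca (funext hc)
  set c : k := h.coeff a s₀ * Q.zweight (-s₀) (0 - -s₀) with hc
  have hcne : c ≠ 0 := by
    have hsub : (0 : Fin n → ℤ) - -s₀ = s₀ := by
      funext i; simp
    rw [hc, hsub]
    exact mul_ne_zero hs₀ (stmt8_zweight_ne_zero Q _ _)
  refine ⟨c⁻¹ • (stmt8mono h (-s₀) * a), ?_, ?_⟩
  · rw [Algebra.smul_def]
    exact TwoSidedIdeal.mul_mem_left _ _ _ (TwoSidedIdeal.mul_mem_left _ _ _ ha)
  · rw [map_smul, Pi.smul_apply, smul_eq_mul]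
    have hmul : h.coeff (stmt8mono h (-s₀) * a) 0 = c := by
      rw [h.coeff_mul]
      have hsingle : ∀ u, u ≠ -s₀ →
          h.coeff (stmt8mono h (-s₀)) u * h.coeff a (0 - u) * Q.zweight u (0 - u) = 0 := by
        intro u hu
        rw [stmt8_coeff_mono, if_neg hu, zero_mul, zero_mul]
      rw [finsum_eq_single _ (-s₀) hsingle, stmt8_coeff_mono, if_pos rfl, one_mul, hc]
      have hsub : (0 : Fin n → ℤ) - -s₀ = s₀ := by funext i; simp
      rw [hsub]
    rw [hmul, inv_mul_cancel₀ hcne]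

end Stmt8Aux3

section Stmt8Aux4

open Function Matrix

variable {k : Type*} [Field k] [Infinite k]

/-- Distinct nonzero scalars. -/
lemma stmt8_exists_distinct_nonzero (m : ℕ) :
    ∃ x : Fin (B + 1) → k, Function.Injective x ∧ ∀ j, x j ≠ 0 := by
  let e := Infinite.natEmbedding k
  refine ⟨fun j => e (j.1 + 1) - e 0, ?_, ?_⟩
  · intro j1 j2 hj
    have h2 : e (j1.1 + 1) = e (j2.1 + 1) := sub_left_injective hj
    have := e.injective h2
    exact Fin.ext (by omega)
  · intro j
    refine sub_ne_zero.mpr fun e' => ?_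
    have := e.injective e'
    omega

/-- Vandermonde solve: a finite family of torus scalars and coefficients whose character sums
vanish on `[-B, -1]` and take the value `1` at `0`. -/
lemma stmt8_exists_killer (B : ℕ) :
    ∃ (m : ℕ) (t : Fin m → kˣ) (lam : Fin m → k),
      ∀ d : ℤ, -(B : ℤ) ≤ d → d ≤ 0 →
        (∑ j, lam j * ((t j ^ d : kˣ) : k)) = if d = 0 then 1 else 0 := by
  obtain ⟨x, hxinj, hx0⟩ := stmt8_exists_distinct_nonzero (k := k) (B + 1)
  let t : Fin (B + 1) → kˣ := fun j => Units.mk0 (x j) (hx0 j)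
  let A : Matrix (Fin (B + 1)) (Fin (B + 1)) k := fun e j => x j ^ (e : ℕ)
  have hdet : IsUnit A.det := by
    have hA : A = (Matrix.vandermonde x)ᵀ := by
      ext e j
      rfl
    rw [hA, Matrix.det_transpose, Matrix.det_vandermonde]
    rw [isUnit_iff_ne_zero]
    refine Finset.prod_ne_zero_iff.mpr fun i _ => Finset.prod_ne_zero_iff.mpr fun j hj => ?_
    exact sub_ne_zero.mpr fun e' => (Finset.mem_Ioi.mp hj).ne' (hxinj e')
  set target : Fin (B + 1) → k := Pi.single (Fin.last B) 1 with htarget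
  set mu : Fin (B + 1) → k := A⁻¹.mulVec target with hmu
  have hAmu : A.mulVec mu = target := by
    rw [hmu, Matrix.mulVec_mulVec, Matrix.mul_nonsing_inv _ hdet, Matrix.one_mulVec]
  refine ⟨B + 1, t, fun j => mu j * ((t j ^ (B : ℕ) : kˣ) : k), ?_⟩
  intro d hd1 hd2
  have heN : ((d + B).toNat : ℤ) = d + B := Int.toNat_of_nonneg (by omega)
  have heNlt : (d + B).toNat < B + 1 := by omega
  set eF : Fin (B + 1) := ⟨(d + B).toNat, heNlt⟩ with heF
  have key := congrFun hAmu eF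
  have hlhs : A.mulVec mu eF = ∑ j, x j ^ ((d + B).toNat) * mu j := by
    rw [Matrix.mulVec]
    rfl
  have hterm : ∀ j : Fin (B + 1),
      mu j * ((t j ^ (B : ℕ) : kˣ) : k) * ((t j ^ d : kˣ) : k)
        = x j ^ ((d + B).toNat) * mu j := by
    intro j
    have h1 : (t j ^ (B : ℕ) : kˣ) * (t j ^ d : kˣ) = t j ^ (((d + B).toNat : ℕ) : ℤ) := by
      rw [← zpow_natCast (t j) B, ← _root_.zpow_add, heN]
      ring_nf
    have h2 : (t j ^ (((d + B).toNat : ℕ) : ℤ) : kˣ) = t j ^ ((d + B).toNat : ℕ) :=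
      zpow_natCast _ _
    calc mu j * ((t j ^ (B : ℕ) : kˣ) : k) * ((t j ^ d : kˣ) : k)
        = mu j * (((t j ^ (B : ℕ) : kˣ) * (t j ^ d : kˣ) : kˣ) : k) := by
          rw [Units.val_mul]; ring
      _ = mu j * ((t j ^ ((d + B).toNat : ℕ) : kˣ) : k) := by rw [h1, h2]
      _ = x j ^ ((d + B).toNat) * mu j := by
          rw [Units.val_pow_eq_pow_val]
          simp only [t, Units.val_mk0]
          ring
  calc (∑ j, mu j * ((t j ^ (B : ℕ) : kˣ) : k) * ((t j ^ d : kˣ) : k))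
      = ∑ j, x j ^ ((d + B).toNat) * mu j := Finset.sum_congr rfl fun j _ => hterm j
    _ = A.mulVec mu eF := hlhs.symm
    _ = target eF := key
    _ = if d = 0 then 1 else 0 := by
        rw [htarget, Pi.single_apply]
        congr 1
        simp only [eq_iff_iff]
        constructor
        · intro he
          have := congrArg Fin.val he
          simp only [heF, Fin.val_last] at this
          omega
        · intro hd0
          apply Fin.ext
          simp only [heF, Fin.val_last]
          omega

end Stmt8Aux4

section Stmt8Aux5

open Function

variable {k : Type*} [Field k] [Infinite k] {n : ℕ} {Q : QMatrix k n}
variable {L : Type*} [Ring L] [Algebra k L]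

/-- One sweep: kill all coefficients with a negative `i`-th exponent. -/
lemma stmt8_sweep (h : IsQLaurentSeriesRing Q L) {b : L}
    (hb : b ∈ (⊥ : TwoSidedIdeal L).jacobson) (hb0 : h.coeff b 0 = 1) (i : Fin n) :
    ∃ b' : L, b' ∈ (⊥ : TwoSidedIdeal L).jacobson ∧ h.coeff b' 0 = 1 ∧
      (∀ s, s i < 0 → h.coeff b' s = 0) ∧ (∀ s, h.coeff b s = 0 → h.coeff b' s = 0) := by
  obtain ⟨B, hB⟩ := h.coeff_bounded b
  obtain ⟨m, t, lam, hV⟩ := stmt8_exists_killer (k := k) B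
  set θ : Fin m → (Fin n → kˣ) := fun j => fun i' => if i' = i then t j else 1 with hθ
  set b' : L := ∑ j, lam j • h.hAct (θ j) b with hb'
  have hchi : ∀ (j : Fin m) (s : Fin n → ℤ), stmt8chi (θ j) s = ((t j ^ (s i) : kˣ) : k) := by
    intro j s
    unfold stmt8chi
    rw [Finset.prod_eq_single_of_mem i (Finset.mem_univ i)]
    · rw [hθ]
      simp
    · intro i' _ hne
      rw [hθ]
      simp [hne]
  have hcoe : ∀ s, h.coeff b' s = (∑ j, lam j * ((t j ^ (s i) : kˣ) : k)) * h.coeff b s := by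
    intro s
    rw [hb', map_sum, Finset.sum_apply, Finset.sum_mul]
    refine Finset.sum_congr rfl fun j _ => ?_
    rw [map_smul, Pi.smul_apply, smul_eq_mul, stmt8_coeff_hAct, hchi, mul_assoc]
  refine ⟨b', ?_, ?_, ?_, ?_⟩
  · rw [hb']
    refine sum_mem fun j _ => ?_
    rw [Algebra.smul_def]
    exact TwoSidedIdeal.mul_mem_left _ _ _ (stmt8_hAct_mem_jacobson h (θ j) hb)
  · rw [hcoe, hb0, mul_one]
    have h0 : (0 : Fin n → ℤ) i = 0 := rfl
    rw [h0]
    have := hV 0 (by omega) (by omega)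
    simpa using this
  · intro s hsi
    by_cases hcase : s i < -(B : ℤ)
    · rw [hcoe, hB s ⟨i, hcase⟩, mul_zero]
    · push_neg at hcase
      rw [hcoe, hV (s i) hcase (by omega), if_neg (by omega), zero_mul]
  · intro s hs0
    rw [hcoe, hs0, mul_zero]

/-- Iterated sweeps over all coordinates. -/
lemma stmt8_sweeps (h : IsQLaurentSeriesRing Q L) {b : L}
    (hb : b ∈ (⊥ : TwoSidedIdeal L).jacobson) (hb0 : h.coeff b 0 = 1) :
    ∃ g : L, g ∈ (⊥ : TwoSidedIdeal L).jacobson ∧ h.coeff g 0 = 1 ∧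
      ∀ s : Fin n → ℤ, (∃ i, s i < 0) → h.coeff g s = 0 := by
  have main : ∀ T : Finset (Fin n), ∃ g : L, g ∈ (⊥ : TwoSidedIdeal L).jacobson ∧
      h.coeff g 0 = 1 ∧ ∀ s : Fin n → ℤ, (∃ i ∈ T, s i < 0) → h.coeff g s = 0 := by
    intro T
    induction T using Finset.induction_on with
    | empty => exact ⟨b, hb, hb0, fun s hs => by obtain ⟨i, hi, _⟩ := hs; simp at hi⟩
    | @insert i T' hnotmem ih =>
      obtain ⟨g, hgJ, hg0, hgkill⟩ := ih
      obtain ⟨g', hg'J, hg'0, hg'kill, hg'pres⟩ := stmt8_sweep h hgJ hg0 i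
      refine ⟨g', hg'J, hg'0, fun s hs => ?_⟩
      obtain ⟨i', hi'mem, hi'neg⟩ := hs
      rcases Finset.mem_insert.mp hi'mem with he | hmem
      · subst he
        exact hg'kill s hi'neg
      · exact hg'pres s (hgkill s ⟨i', hmem, hi'neg⟩)
  obtain ⟨g, h1, h2, h3⟩ := main Finset.univ
  exact ⟨g, h1, h2, fun s hs => h3 s (by obtain ⟨i, hi⟩ := hs; exact ⟨i, Finset.mem_univ i, hi⟩)⟩

end Stmt8Aux5

section Stmt8Aux6

open Function

variable {k : Type*} [Field k] {n : ℕ}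

/-- Coefficients of the formal inverse of a series with support in `ℕ^n` and constant
coefficient `1`, defined by recursion on the total degree. -/
noncomputable def stmt8invC (Q : QMatrix k n) (G : (Fin n → ℤ) → k) :
    (Fin n → ℤ) → k
  | s =>
    if hs : (∀ i, 0 ≤ s i) ∧ s ≠ 0 then
      - ∑ u ∈ ((Finset.Icc 0 s).erase s).attach,
          stmt8invC Q G u.1 * G (s - u.1) * Q.zweight u.1 (s - u.1)
    else if s = 0 then 1 else 0
  termination_by s => (∑ i, s i).toNat
  decreasing_by
    show (∑ i, u.1 i).toNat < (∑ i, s i).toNat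
    have hmem := u.2
    rw [Finset.mem_erase, Finset.mem_Icc] at hmem
    obtain ⟨hne, h0u, hus⟩ := hmem
    have hle : ∀ i, u.1 i ≤ s i := fun i => hus i
    have hstrict : ∃ i, u.1 i < s i := by
      by_contra hc
      push_neg at hc
      exact hne (funext fun i => le_antisymm (hle i) (hc i))
    have hsum : (∑ i, u.1 i) < ∑ i, s i := by
      obtain ⟨i₀, hi₀⟩ := hstrict
      exact Finset.sum_lt_sum (fun i _ => hle i) ⟨i₀, Finset.mem_univ i₀, hi₀⟩
    have h0sum : (0 : ℤ) ≤ ∑ i, u.1 i :=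
      Finset.sum_nonneg fun i _ => h0u i
    omega

end Stmt8Aux6

section Stmt8Aux7

open Function

variable {k : Type*} [Field k] {n : ℕ}

lemma stmt8invC_zero (Q : QMatrix k n) (G : (Fin n → ℤ) → k) :
    stmt8invC Q G 0 = 1 := by
  rw [stmt8invC]
  simp

lemma stmt8invC_of_neg (Q : QMatrix k n) (G : (Fin n → ℤ) → k) {s : Fin n → ℤ}
    (hs : ¬ ∀ i, 0 ≤ s i) : stmt8invC Q G s = 0 := by
  have hs0 : s ≠ 0 := by
    intro e
    exact hs (by rw [e]; intro i; simp)
  rw [stmt8invC, dif_neg (by tauto), if_neg hs0]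

lemma stmt8invC_rec (Q : QMatrix k n) (G : (Fin n → ℤ) → k) {s : Fin n → ℤ}
    (h1 : ∀ i, 0 ≤ s i) (h2 : s ≠ 0) :
    stmt8invC Q G s
      = - ∑ u ∈ (Finset.Icc 0 s).erase s,
          stmt8invC Q G u * G (s - u) * Q.zweight u (s - u) := by
  rw [stmt8invC, dif_pos ⟨h1, h2⟩]
  congr 1
  exact Finset.sum_attach ((Finset.Icc 0 s).erase s)
    (fun v => stmt8invC Q G v * G (s - v) * Q.zweight v (s - v))

end Stmt8Aux7

section Stmt8Aux8

open Function

variable {k : Type*} [Field k] {n : ℕ} {Q : QMatrix k n}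
variable {L : Type*} [Ring L] [Algebra k L]

/-- An element of the Jacobson radical with constant coefficient `1` and support contained in
`ℕ^n` yields a contradiction: it is a unit. -/
lemma stmt8_final (h : IsQLaurentSeriesRing Q L) {g : L}
    (hgJ : g ∈ (⊥ : TwoSidedIdeal L).jacobson) (hg0 : h.coeff g 0 = 1)
    (hpos : ∀ s : Fin n → ℤ, (∃ i, s i < 0) → h.coeff g s = 0) : False := by
  set G : (Fin n → ℤ) → k := h.coeff g with hG
  have hbdd : LaurentBounded (stmt8invC Q G) := by
    refine ⟨0, fun s hs => ?_⟩
    obtain ⟨i, hi⟩ := hs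
    exact stmt8invC_of_neg Q G fun hc => by have := hc i; omega
  obtain ⟨z, hz⟩ := h.coeff_surjective (stmt8invC Q G) hbdd
  have hzg : z * g = 1 := by
    apply h.coeff_injective
    funext s
    rw [h.coeff_mul, h.coeff_one, hz, ← hG]
    by_cases hsnn : ∀ i, 0 ≤ s i
    · have hsupp : Function.support
          (fun u => stmt8invC Q G u * G (s - u) * Q.zweight u (s - u))
            ⊆ ((Finset.Icc 0 s : Finset (Fin n → ℤ)) : Set (Fin n → ℤ)) := by
        intro u hu
        rw [Function.mem_support] at hu
        have h1 : stmt8invC Q G u ≠ 0 := fun e => hu (by rw [e, zero_mul, zero_mul])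
        have h2 : G (s - u) ≠ 0 := fun e => hu (by rw [e, mul_zero, zero_mul])
        have hu0 : ∀ i, 0 ≤ u i := by
          by_contra hc
          exact h1 (stmt8invC_of_neg Q G hc)
        have hus : ∀ i, u i ≤ s i := by
          intro i
          by_contra hc
          exact h2 (hpos (s - u) ⟨i, by simpa using by omega⟩)
        rw [Finset.coe_Icc, Set.mem_Icc]
        exact ⟨fun i => hu0 i, fun i => hus i⟩
      rw [finsum_eq_finset_sum_of_support_subset _ hsupp]
      by_cases hs0 : s = 0
      · subst hs0
        rw [if_pos rfl]
        have hIcc : (Finset.Icc (0 : Fin n → ℤ) 0) = {0} := Finset.Icc_self 0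
        rw [hIcc, Finset.sum_singleton, stmt8invC_zero, sub_zero]
        rw [hg0, stmt8_zweight_fst_zero, one_mul, mul_one]
      · rw [if_neg hs0]
        have hmem : s ∈ Finset.Icc (0 : Fin n → ℤ) s :=
          Finset.mem_Icc.mpr ⟨fun i => hsnn i, le_refl s⟩
        rw [← Finset.sum_erase_add _ _ hmem]
        have hFs : stmt8invC Q G s * G (s - s) * Q.zweight s (s - s) = stmt8invC Q G s := by
          rw [sub_self, stmt8_zweight_snd_zero, mul_one]
          rw [hg0, mul_one]
        rw [hFs, stmt8invC_rec Q G hsnn hs0]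
        exact add_neg_cancel _
    · push_neg at hsnn
      obtain ⟨i, hi⟩ := hsnn
      have hs0 : s ≠ 0 := by
        intro e
        rw [e] at hi
        simp at hi
      rw [if_neg hs0]
      refine finsum_eq_zero_of_forall_eq_zero fun u => ?_
      by_cases hu0 : ∀ i, 0 ≤ u i
      · have : G (s - u) = 0 := hpos (s - u) ⟨i, by
          have := hu0 i
          simp only [Pi.sub_apply]
          omega⟩
        rw [this, mul_zero, zero_mul]
      · rw [stmt8invC_of_neg Q G hu0, zero_mul, zero_mul]
  obtain ⟨w, hw⟩ := TwoSidedIdeal.mem_jacobson_iff.mp hgJ (-z)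
  rw [TwoSidedIdeal.mem_bot] at hw
  have hcalc : w * -z * g = -w := by
    rw [mul_assoc, neg_mul, hzg, mul_neg, mul_one]
  rw [hcalc, neg_add_cancel, zero_sub, neg_eq_zero] at hw
  exact stmt8_one_ne_zero h hw

end Stmt8Aux8
/-- Assume `k` is infinite. Then the Jacobson radical of the
`q`-commutative Laurent series ring `L` is zero. -/
theorem stmt_8 {k : Type*} [Field k] [Infinite k] {n : ℕ} (hn : 0 < n) (Q : QMatrix k n)
    (L : Type*) [Ring L] [Algebra k L] (h : IsQLaurentSeriesRing Q L) :
    (⊥ : TwoSidedIdeal L).jacobson = ⊥ := by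
  rw [eq_bot_iff]
  intro a ha
  rw [TwoSidedIdeal.mem_bot]
  by_contra hne
  obtain ⟨b, hbJ, hb0⟩ := stmt8_exists_normalized h ha hne
  obtain ⟨g, hgJ, hg0, hpos⟩ := stmt8_sweeps h hbJ hb0
  exact stmt8_final h hgJ hg0 hpos

end
end

section
/- Every ideal K of the center Z of L satisfies K = (LK) ∩ Z, where LK denotes the two-sided ideal of L generated by K. (No assumption on the field k is needed.) -/
/-!
Common setup: `q`-commutative power series ring `R = k_q[[x_1,…,x_n]]` and
`q`-commutative Laurent series ring `L = k_q[[x_1^{±1},…,x_n^{±1}]]`, characterized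
by their coefficient descriptions (twisted convolution multiplication).
-/

noncomputable section

/-! ### Auxiliary development for statement 10 -/

open scoped Classical

namespace Stmt10Aux

variable {k : Type*} [Field k] {n : ℕ} (Q : QMatrix k n)

lemma zweight_ne_zero (u v : Fin n → ℤ) : Q.zweight u v ≠ 0 := by
  unfold QMatrix.zweight
  rw [Finset.prod_ne_zero_iff]
  intro i _
  rw [Finset.prod_ne_zero_iff]
  intro j _
  split
  · exact zpow_ne_zero _ (Q.q_ne_zero i j)
  · exact one_ne_zero

lemma zweight_add_left (u v t : Fin n → ℤ) :
    Q.zweight (u + v) t = Q.zweight u t * Q.zweight v t := by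
  unfold QMatrix.zweight
  rw [← Finset.prod_mul_distrib]
  refine Finset.prod_congr rfl fun i _ => ?_
  rw [← Finset.prod_mul_distrib]
  refine Finset.prod_congr rfl fun j _ => ?_
  split
  · rw [Pi.add_apply, add_mul, zpow_add₀ (Q.q_ne_zero i j)]
  · rw [one_mul]

lemma zweight_add_right (u v t : Fin n → ℤ) :
    Q.zweight t (u + v) = Q.zweight t u * Q.zweight t v := by
  unfold QMatrix.zweight
  rw [← Finset.prod_mul_distrib]
  refine Finset.prod_congr rfl fun i _ => ?_
  rw [← Finset.prod_mul_distrib]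
  refine Finset.prod_congr rfl fun j _ => ?_
  split
  · rw [Pi.add_apply, mul_add, zpow_add₀ (Q.q_ne_zero i j)]
  · rw [one_mul]

lemma zweight_zero_left (t : Fin n → ℤ) : Q.zweight 0 t = 1 := by
  unfold QMatrix.zweight
  refine Finset.prod_eq_one fun i _ => Finset.prod_eq_one fun j _ => ?_
  split
  · rw [Pi.zero_apply, zero_mul, zpow_zero]
  · rfl

lemma zweight_zero_right (t : Fin n → ℤ) : Q.zweight t 0 = 1 := by
  unfold QMatrix.zweight
  refine Finset.prod_eq_one fun i _ => Finset.prod_eq_one fun j _ => ?_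
  split
  · rw [Pi.zero_apply, mul_zero, zpow_zero]
  · rfl

/-- The "symmetric" (central) support: exponents `s` such that the twisting weight
against any `t` is symmetric; these are exactly the exponents of central monomials. -/
def Csym (s : Fin n → ℤ) : Prop := ∀ t : Fin n → ℤ, Q.zweight s t = Q.zweight t s

lemma Csym_zero : Csym Q (0 : Fin n → ℤ) := fun t => by
  rw [zweight_zero_left, zweight_zero_right]

lemma Csym_add {a b : Fin n → ℤ} (ha : Csym Q a) (hb : Csym Q b) : Csym Q (a + b) :=
  fun t => by rw [zweight_add_left, zweight_add_right, ha t, hb t]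

lemma Csym_neg {a : Fin n → ℤ} (ha : Csym Q a) : Csym Q (-a) := by
  intro t
  have h1 : Q.zweight a t * Q.zweight (-a) t = 1 := by
    rw [← zweight_add_left, add_neg_cancel, zweight_zero_left]
  have h2 : Q.zweight t a * Q.zweight t (-a) = 1 := by
    rw [← zweight_add_right, add_neg_cancel, zweight_zero_right]
  rw [ha t] at h1
  exact mul_left_cancel₀ (by rw [← ha t]; exact zweight_ne_zero Q a t) (h1.trans h2.symm)

lemma Csym_sub {a b : Fin n → ℤ} (ha : Csym Q a) (hb : Csym Q b) : Csym Q (a - b) := by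
  rw [sub_eq_add_neg]
  exact Csym_add Q ha (Csym_neg Q hb)

variable {L : Type*} [Ring L] [Algebra k L] (h : IsQLaurentSeriesRing Q L)

/-- Existence of the monomial `x^t` in `L`. -/
lemma exists_mono (t : Fin n → ℤ) :
    ∃ f : L, h.coeff f = fun s => if s = t then 1 else 0 :=
  h.coeff_surjective (fun s => if s = t then 1 else 0)
    ⟨Finset.univ.sup fun i => (t i).natAbs, by
      intro s ⟨i, hi⟩
      by_contra hne
      have hst : s = t := by
        by_contra hst
        exact hne (if_neg hst)
      subst hst
      have h1 : (s i).natAbs ≤ Finset.univ.sup fun j => (s j).natAbs :=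
        Finset.le_sup (f := fun j => (s j).natAbs) (Finset.mem_univ i)
      omega⟩

/-- The monomial `x^t` in `L`. -/
def mono (t : Fin n → ℤ) : L := Classical.choose (exists_mono Q h t)

lemma coeff_mono (t : Fin n → ℤ) :
    h.coeff (mono Q h t) = fun s => if s = t then 1 else 0 :=
  Classical.choose_spec (exists_mono Q h t)

lemma coeff_mul_mono (f : L) (t s : Fin n → ℤ) :
    h.coeff (f * mono Q h t) s = h.coeff f (s - t) * Q.zweight (s - t) t := by
  rw [h.coeff_mul]
  rw [finsum_eq_single _ (s - t)]
  · simp [coeff_mono, sub_sub_cancel]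
  · intro u hu
    have : ¬(s - u = t) := fun he => hu (by rw [← he]; abel)
    simp [coeff_mono, this]

lemma coeff_mono_mul (f : L) (t s : Fin n → ℤ) :
    h.coeff (mono Q h t * f) s = h.coeff f (s - t) * Q.zweight t (s - t) := by
  rw [h.coeff_mul]
  rw [finsum_eq_single _ t]
  · simp [coeff_mono]
  · intro u hu
    simp [coeff_mono, hu]

/-- The support of a central element lies in `Csym`. -/
lemma central_support {z : L} (hz : ∀ g : L, g * z = z * g) {v : Fin n → ℤ}
    (hv : h.coeff z v ≠ 0) : Csym Q v := by
  intro t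
  have := hz (mono Q h t)
  have hc : h.coeff (mono Q h t * z) (v + t) = h.coeff (z * mono Q h t) (v + t) := by
    rw [this]
  rw [coeff_mono_mul, coeff_mul_mono, add_sub_cancel_right] at hc
  exact (mul_left_cancel₀ hv hc.symm)

/-- Elements supported on `Csym` are central. -/
lemma central_of_support {f : L} (hf : ∀ s, h.coeff f s ≠ 0 → Csym Q s) :
    ∀ g : L, g * f = f * g := by
  intro g
  apply h.coeff_injective
  funext s
  rw [h.coeff_mul, h.coeff_mul]
  rw [show (∑ᶠ u, h.coeff g u * h.coeff f (s - u) * Q.zweight u (s - u)) =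
      ∑ᶠ u, (fun w => h.coeff g w * h.coeff f (s - w) * Q.zweight w (s - w))
        ((Equiv.subLeft s) u) from (finsum_comp_equiv (Equiv.subLeft s)).symm]
  apply finsum_congr
  intro u
  simp only [Equiv.subLeft_apply, sub_sub_cancel]
  by_cases hu : h.coeff f u = 0
  · simp [hu]
  · rw [(hf u hu) (s - u)]
    ring

lemma exists_proj (f : L) :
    ∃ g : L, h.coeff g = fun s => if Csym Q s then h.coeff f s else 0 :=
  h.coeff_surjective _
    (by
      obtain ⟨N, hN⟩ := h.coeff_bounded f
      refine ⟨N, fun s hs => ?_⟩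
      simp only [hN s hs, ite_self])

/-- The projection of `L` onto its center: kill all coefficients outside `Csym`. -/
def proj (f : L) : L := Classical.choose (exists_proj Q h f)

lemma coeff_proj (f : L) :
    h.coeff (proj Q h f) = fun s => if Csym Q s then h.coeff f s else 0 :=
  Classical.choose_spec (exists_proj Q h f)

lemma proj_support {f : L} {s : Fin n → ℤ} (hs : h.coeff (proj Q h f) s ≠ 0) : Csym Q s := by
  by_contra hc
  simp only [coeff_proj, if_neg hc] at hs
  exact hs rfl

lemma proj_central (f : L) : ∀ g : L, g * proj Q h f = proj Q h f * g :=
  central_of_support Q h fun _ hs => proj_support Q h hs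

lemma proj_add (f g : L) : proj Q h (f + g) = proj Q h f + proj Q h g := by
  apply h.coeff_injective
  funext s
  simp only [map_add, Pi.add_apply, coeff_proj]
  split
  · rfl
  · rw [add_zero]

lemma proj_neg (f : L) : proj Q h (-f) = -proj Q h f := by
  apply h.coeff_injective
  funext s
  simp only [map_neg, Pi.neg_apply, coeff_proj]
  split
  · rfl
  · rw [neg_zero]

lemma proj_zero : proj Q h (0 : L) = 0 := by
  apply h.coeff_injective
  funext s
  simp only [coeff_proj, map_zero, Pi.zero_apply, ite_self]

lemma proj_eq_self {z : L} (hz : ∀ g : L, g * z = z * g) : proj Q h z = z := by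
  apply h.coeff_injective
  funext s
  simp only [coeff_proj]
  split
  · rfl
  · next hc =>
    by_contra hne
    exact hc (central_support Q h hz fun h0 => hne h0.symm)

lemma proj_mul_central (f z : L) (hz : ∀ g : L, g * z = z * g) :
    proj Q h (f * z) = proj Q h f * z := by
  apply h.coeff_injective
  funext s
  simp only [coeff_proj, h.coeff_mul]
  by_cases hs : Csym Q s
  · rw [if_pos hs]
    apply finsum_congr
    intro u
    by_cases hu : h.coeff z (s - u) = 0
    · simp [hu]
    · have hsu : Csym Q (s - u) := central_support Q h hz hu
      have hcu : Csym Q u := by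
        have := Csym_sub Q hs hsu
        rwa [sub_sub_cancel] at this
      rw [if_pos hcu]
  · rw [if_neg hs]
    symm
    apply finsum_eq_zero_of_forall_eq_zero
    intro u
    by_cases hcu : Csym Q u
    · by_cases hzu : h.coeff z (s - u) = 0
      · simp [hzu]
      · refine absurd ?_ hs
        have := Csym_add Q hcu (central_support Q h hz hzu)
        rwa [add_sub_cancel] at this
    · simp [if_neg hcu]

end Stmt10Aux

/-- Every ideal `K` of the center `Z` of `L` satisfies
`K = (LK) ∩ Z`, where `LK` is the two-sided ideal of `L` generated by `K`.
(No assumption on the field `k` is needed.) -/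
theorem stmt_10 {k : Type*} [Field k] {n : ℕ} (hn : 0 < n) (Q : QMatrix k n)
    (L : Type*) [Ring L] [Algebra k L] (h : IsQLaurentSeriesRing Q L)
    (K : Ideal (Subring.center L)) :
    ∀ z : Subring.center L, z ∈ K ↔
      (z : L) ∈ TwoSidedIdeal.span (Subtype.val '' (K : Set (Subring.center L))) := by
  intro z
  set K' : Set L := Subtype.val '' (K : Set (Subring.center L)) with hK'
  constructor
  · intro hz
    exact TwoSidedIdeal.subset_span ⟨z, hz, rfl⟩
  · intro hz
    have hzc : ∀ g : L, g * (z : L) = (z : L) * g := fun g =>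
      Subring.mem_center_iff.mp z.2 g
    -- the auxiliary two-sided ideal
    let I : TwoSidedIdeal L := TwoSidedIdeal.mk'
      {f : L | ∀ a b : L, Stmt10Aux.proj Q h (a * f * b) ∈ K'}
      (fun a b => by
        rw [mul_zero, zero_mul, Stmt10Aux.proj_zero]
        exact ⟨0, K.zero_mem, rfl⟩)
      (fun {x y} hx hy a b => by
        rw [mul_add, add_mul, Stmt10Aux.proj_add]
        obtain ⟨zx, hzx, hvx⟩ := hx a b
        obtain ⟨zy, hzy, hvy⟩ := hy a b
        exact ⟨zx + zy, K.add_mem hzx hzy, by rw [← hvx, ← hvy]; rfl⟩)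
      (fun {x} hx a b => by
        rw [mul_neg, neg_mul, Stmt10Aux.proj_neg]
        obtain ⟨zx, hzx, hvx⟩ := hx a b
        exact ⟨-zx, neg_mem hzx, by rw [← hvx]; rfl⟩)
      (fun {x y} hy a b => by
        rw [show a * (x * y) * b = (a * x) * y * b by rw [← mul_assoc a x y]]
        exact hy (a * x) b)
      (fun {x y} hx a b => by
        rw [show a * (x * y) * b = (a * x) * (y * b) by rw [← mul_assoc a x y, mul_assoc (a * x) y b]]
        exact hx a (y * b))
    have hSI : K' ⊆ (I : Set L) := by
      rintro w ⟨z', hz', rfl⟩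
      rw [SetLike.mem_coe, TwoSidedIdeal.mem_mk']
      intro a b
      have hc : ∀ g : L, g * (z' : L) = (z' : L) * g := fun g =>
        Subring.mem_center_iff.mp z'.2 g
      rw [show a * (z' : L) * b = (a * b) * (z' : L) by
        rw [mul_assoc, ← hc b, ← mul_assoc]]
      rw [Stmt10Aux.proj_mul_central Q h (a * b) _ hc]
      refine ⟨⟨Stmt10Aux.proj Q h (a * b),
        Subring.mem_center_iff.mpr (Stmt10Aux.proj_central Q h (a * b))⟩ * z',
        K.mul_mem_left _ hz', rfl⟩
    have hmem := TwoSidedIdeal.mem_span_iff.mp hz I hSI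
    have hkey := TwoSidedIdeal.mem_mk' _ _ _ _ _ _ ((z : L)) |>.mp hmem 1 1
    rw [one_mul, mul_one, Stmt10Aux.proj_eq_self Q h hzc] at hkey
    obtain ⟨z', hz', hv⟩ := hkey
    rwa [show z' = z from Subtype.coe_injective hv] at hz'

end
end

section
/- Assume k is infinite. Then the H-prime ideals of R are exactly the 2^n ideals J_w, for subsets w ⊆ {1,…,n}. -/
/-!
Common setup: `q`-commutative power series ring `R = k_q[[x_1,…,x_n]]` and
`q`-commutative Laurent series ring `L = k_q[[x_1^{±1},…,x_n^{±1}]]`, characterized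
by their coefficient descriptions (twisted convolution multiplication).
-/

noncomputable section

/-- A two-sided ideal `I ≠ R` of `R` is `H`-prime if it is `H`-stable and whenever
`A, B` are `H`-stable two-sided ideals with `AB ⊆ I`, then `A ⊆ I` or `B ⊆ I`. -/
def IsQPowerSeriesRing.IsHPrime {k : Type*} [Field k] {n : ℕ} {Q : QMatrix k n}
    {R : Type*} [Ring R] [Algebra k R] (h : IsQPowerSeriesRing Q R)
    (I : TwoSidedIdeal R) : Prop :=
  h.IsHStable I ∧ I ≠ ⊤ ∧
    ∀ A B : TwoSidedIdeal R, h.IsHStable A → h.IsHStable B →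
      (∀ a ∈ A, ∀ b ∈ B, a * b ∈ I) → A ≤ I ∨ B ≤ I


/-! ### Auxiliary lemmas -/

namespace QMatrix

variable {k : Type*} [Field k] {n : ℕ} (Q : QMatrix k n)

lemma weight_ne_zero (u v : Fin n →₀ ℕ) : Q.weight u v ≠ 0 := by
  unfold weight
  rw [Finset.prod_ne_zero_iff]
  intro i _
  rw [Finset.prod_ne_zero_iff]
  intro j _
  split
  · exact pow_ne_zero _ (Q.q_ne_zero i j)
  · exact one_ne_zero

lemma weight_zero_left (v : Fin n →₀ ℕ) : Q.weight 0 v = 1 := by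
  unfold weight; simp

lemma weight_zero_right (u : Fin n →₀ ℕ) : Q.weight u 0 = 1 := by
  unfold weight; simp

end QMatrix

/-- total degree of an exponent vector -/
def ndeg {n : ℕ} (s : Fin n →₀ ℕ) : ℕ := s.sum fun _ m => m

lemma ndeg_add {n : ℕ} (a b : Fin n →₀ ℕ) : ndeg (a + b) = ndeg a + ndeg b :=
  Finsupp.sum_add_index' (fun _ => rfl) (fun _ _ _ => rfl)

lemma ndeg_eq_zero {n : ℕ} {s : Fin n →₀ ℕ} : ndeg s = 0 ↔ s = 0 := by
  constructor
  · intro hs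
    ext i
    simp only [Finsupp.coe_zero, Pi.zero_apply]
    by_contra hi
    have hmem : i ∈ s.support := Finsupp.mem_support_iff.2 hi
    have : s i ≤ ndeg s := Finset.single_le_sum (fun j _ => Nat.zero_le _) hmem
    omega
  · rintro rfl; rfl

lemma ndeg_single {n : ℕ} (i : Fin n) : ndeg (Finsupp.single i 1) = 1 := by
  unfold ndeg
  rw [Finsupp.sum_single_index rfl]

lemma sum_antidiagonal_left {k : Type*} [Field k] {n : ℕ} (s a : Fin n →₀ ℕ)
    (F : (Fin n →₀ ℕ) → k) :
    ∑ uv ∈ Finset.HasAntidiagonal.antidiagonal s, (if uv.1 = a then F uv.2 else 0) =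
      if a ≤ s then F (s - a) else 0 := by
  by_cases hle : a ≤ s
  · rw [if_pos hle, Finset.sum_eq_single_of_mem (a, s - a)]
    · simp
    · rw [Finset.HasAntidiagonal.mem_antidiagonal]; exact add_tsub_cancel_of_le hle
    · rintro ⟨u, v⟩ hm hne
      rw [Finset.HasAntidiagonal.mem_antidiagonal] at hm
      rw [if_neg]
      rintro rfl
      exact hne (Prod.ext rfl (eq_tsub_of_add_eq (by rwa [add_comm] at hm)))
  · rw [if_neg hle]
    apply Finset.sum_eq_zero
    rintro ⟨u, v⟩ hm
    rw [Finset.HasAntidiagonal.mem_antidiagonal] at hm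
    rw [if_neg]
    rintro rfl
    exact hle (hm ▸ self_le_add_right u v)

lemma sum_antidiagonal_right {k : Type*} [Field k] {n : ℕ} (s a : Fin n →₀ ℕ)
    (F : (Fin n →₀ ℕ) → k) :
    ∑ uv ∈ Finset.HasAntidiagonal.antidiagonal s, (if uv.2 = a then F uv.1 else 0) =
      if a ≤ s then F (s - a) else 0 := by
  by_cases hle : a ≤ s
  · rw [if_pos hle, Finset.sum_eq_single_of_mem (s - a, a)]
    · simp
    · rw [Finset.HasAntidiagonal.mem_antidiagonal]; exact tsub_add_cancel_of_le hle
    · rintro ⟨u, v⟩ hm hne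
      rw [Finset.HasAntidiagonal.mem_antidiagonal] at hm
      rw [if_neg]
      rintro rfl
      exact hne (Prod.ext (eq_tsub_of_add_eq hm) rfl)
  · rw [if_neg hle]
    apply Finset.sum_eq_zero
    rintro ⟨u, v⟩ hm
    rw [Finset.HasAntidiagonal.mem_antidiagonal] at hm
    rw [if_neg]
    rintro rfl
    exact hle (hm ▸ self_le_add_left v u)

lemma exists_pow_ne_one (k : Type*) [Field k] [Infinite k] {m : ℕ} (hm : 0 < m) :
    ∃ t : kˣ, t ^ m ≠ 1 := by
  by_contra hall
  push_neg at hall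
  have hp : (Polynomial.X ^ m - 1 : Polynomial k) ≠ 0 := by
    intro h0
    have := congrArg (Polynomial.eval 0) h0
    simp [zero_pow hm.ne'] at this
  have hfin : Set.Finite {x : k | Polynomial.IsRoot (Polynomial.X ^ m - 1) x} :=
    Polynomial.finite_setOf_isRoot hp
  have : (Set.univ : Set k).Finite := by
    apply Set.Finite.subset (hfin.union (Set.finite_singleton 0))
    intro x _
    by_cases hx : x = 0
    · exact Or.inr hx
    · left
      have := hall (Units.mk0 x hx)
      have hxm : x ^ m = 1 := by
        have := congrArg (Units.val) this
        simpa using this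
      simp [Polynomial.IsRoot, hxm]
  exact Set.infinite_univ this

/-- coefficientwise potential inverse of a power series with invertible constant term -/
def invCoeff {k : Type*} [Field k] {n : ℕ} (Q : QMatrix k n) (c : (Fin n →₀ ℕ) → k)
    (s : Fin n →₀ ℕ) : k :=
  (c 0)⁻¹ * ((if s = 0 then 1 else 0) -
    ∑ uv ∈ (Finset.HasAntidiagonal.antidiagonal s).attach,
      if h1 : uv.1.1 = 0 then 0 else c uv.1.1 * invCoeff Q c uv.1.2 * Q.weight uv.1.1 uv.1.2)
termination_by ndeg s
decreasing_by
  have hm : uv.1.1 + uv.1.2 = s := Finset.HasAntidiagonal.mem_antidiagonal.1 uv.2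
  have h2 : ndeg uv.1.1 + ndeg uv.1.2 = ndeg s := by rw [← ndeg_add, hm]
  have h3 : ndeg uv.1.1 ≠ 0 := fun h0 => h1 (ndeg_eq_zero.1 h0)
  omega

namespace IsQPowerSeriesRing

variable {k : Type*} [Field k] {n : ℕ} {Q : QMatrix k n}
variable {R : Type*} [Ring R] [Algebra k R] (h : IsQPowerSeriesRing Q R)

lemma coeff_symm_apply (c : (Fin n →₀ ℕ) → k) (s : Fin n →₀ ℕ) :
    h.coeff (h.coeff.symm c) s = c s := by
  rw [LinearEquiv.apply_symm_apply]

lemma coeff_X (i : Fin n) (t : Fin n →₀ ℕ) :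
    h.coeff (h.X i) t = if t = Finsupp.single i 1 then 1 else 0 := by
  rw [X, mono, coeff_symm_apply]

lemma coeff_X_mul (i : Fin n) (f : R) (s : Fin n →₀ ℕ) :
    h.coeff (h.X i * f) s = if s i = 0 then 0
      else Q.weight (Finsupp.single i 1) (s - Finsupp.single i 1) *
        h.coeff f (s - Finsupp.single i 1) := by
  rw [h.coeff_mul]
  have step : ∑ uv ∈ Finset.HasAntidiagonal.antidiagonal s,
      h.coeff (h.X i) uv.1 * h.coeff f uv.2 * Q.weight uv.1 uv.2 =
      ∑ uv ∈ Finset.HasAntidiagonal.antidiagonal s, (if uv.1 = Finsupp.single i 1 then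
        Q.weight (Finsupp.single i 1) uv.2 * h.coeff f uv.2 else 0) := by
    apply Finset.sum_congr rfl
    intro uv _
    rw [h.coeff_X]
    split_ifs with h1
    · rw [h1]; ring
    · simp
  rw [step, sum_antidiagonal_left s (Finsupp.single i 1)
    (fun t => Q.weight (Finsupp.single i 1) t * h.coeff f t)]
  have hiff : Finsupp.single i 1 ≤ s ↔ ¬ s i = 0 := by
    rw [Finsupp.single_le_iff, Nat.one_le_iff_ne_zero]
  by_cases h0 : s i = 0
  · rw [if_neg (fun hle => (hiff.1 hle) h0), if_pos h0]
  · rw [if_pos (hiff.2 h0), if_neg h0]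

lemma coeff_mul_X (i : Fin n) (f : R) (s : Fin n →₀ ℕ) :
    h.coeff (f * h.X i) s = if s i = 0 then 0
      else h.coeff f (s - Finsupp.single i 1) *
        Q.weight (s - Finsupp.single i 1) (Finsupp.single i 1) := by
  rw [h.coeff_mul]
  have step : ∑ uv ∈ Finset.HasAntidiagonal.antidiagonal s,
      h.coeff f uv.1 * h.coeff (h.X i) uv.2 * Q.weight uv.1 uv.2 =
      ∑ uv ∈ Finset.HasAntidiagonal.antidiagonal s, (if uv.2 = Finsupp.single i 1 then
        h.coeff f uv.1 * Q.weight uv.1 (Finsupp.single i 1) else 0) := by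
    apply Finset.sum_congr rfl
    intro uv _
    rw [h.coeff_X]
    split_ifs with h1
    · rw [h1]; ring
    · simp
  rw [step, sum_antidiagonal_right s (Finsupp.single i 1)
    (fun t => h.coeff f t * Q.weight t (Finsupp.single i 1))]
  have hiff : Finsupp.single i 1 ≤ s ↔ ¬ s i = 0 := by
    rw [Finsupp.single_le_iff, Nat.one_le_iff_ne_zero]
  by_cases h0 : s i = 0
  · rw [if_neg (fun hle => (hiff.1 hle) h0), if_pos h0]
  · rw [if_pos (hiff.2 h0), if_neg h0]

lemma coeff_inj {f g : R} (hfg : ∀ s, h.coeff f s = h.coeff g s) : f = g :=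
  h.coeff.injective (funext hfg)

lemma coeff_hAct (θ : Fin n → kˣ) (f : R) (s : Fin n →₀ ℕ) :
    h.coeff (h.hAct θ f) s = (∏ i, (θ i : k) ^ s i) * h.coeff f s := by
  rw [hAct, coeff_symm_apply]

lemma hAct_inv_cancel (θ : Fin n → kˣ) (f : R) :
    h.hAct θ (h.hAct (fun i => (θ i)⁻¹) f) = f := by
  apply h.coeff_inj
  intro s
  rw [h.coeff_hAct, h.coeff_hAct, ← mul_assoc, ← Finset.prod_mul_distrib]
  have : ∀ i ∈ Finset.univ, (θ i : k) ^ s i * ((θ i)⁻¹ : kˣ) ^ s i = 1 := by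
    intro i _
    rw [Units.val_inv_eq_inv_val, ← mul_pow, mul_inv_cancel₀ (θ i).ne_zero, one_pow]
  rw [Finset.prod_congr rfl this, Finset.prod_const_one, one_mul]

lemma smul_mem_ideal (I : TwoSidedIdeal R) (c : k) {f : R} (hf : f ∈ I) : c • f ∈ I := by
  rw [Algebra.smul_def]
  exact I.mul_mem_left _ _ hf

lemma isHStable_of (S : TwoSidedIdeal R) (hmap : ∀ θ (f : R), f ∈ S → h.hAct θ f ∈ S) :
    h.IsHStable S := by
  intro θ
  apply subset_antisymm
  · rintro _ ⟨f, hf, rfl⟩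
    exact hmap θ f hf
  · intro f hf
    exact ⟨h.hAct (fun i => (θ i)⁻¹) f, hmap _ f hf, h.hAct_inv_cancel θ f⟩

lemma hAct_mem (I : TwoSidedIdeal R) (hI : h.IsHStable I) (θ : Fin n → kˣ) {f : R}
    (hf : f ∈ I) : h.hAct θ f ∈ I := by
  have := hI θ
  have : h.hAct θ f ∈ h.hAct θ '' (I : Set R) := ⟨f, hf, rfl⟩
  rwa [hI θ] at this

end IsQPowerSeriesRing

namespace IsQPowerSeriesRing

variable {k : Type*} [Field k] {n : ℕ} {Q : QMatrix k n}
variable {R : Type*} [Ring R] [Algebra k R] (h : IsQPowerSeriesRing Q R)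

/-- The "coefficient description" of `J_w`. -/
def Sw (w : Finset (Fin n)) : TwoSidedIdeal R :=
  TwoSidedIdeal.mk' {f : R | ∀ s, (∀ j ∈ w, s j = 0) → h.coeff f s = 0}
    (fun s _ => by rw [map_zero]; rfl)
    (fun {x y} hx hy s hs => by rw [map_add]; simp [hx s hs, hy s hs])
    (fun {x} hx s hs => by rw [map_neg]; simp [hx s hs])
    (fun {x y} hy s hs => by
      rw [h.coeff_mul]
      apply Finset.sum_eq_zero
      rintro ⟨u, v⟩ hm
      rw [Finset.HasAntidiagonal.mem_antidiagonal] at hm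
      replace hm : u + v = s := hm
      have hv : ∀ j ∈ w, v j = 0 := fun j hj => by
        have hadd : u j + v j = s j := by rw [← hm, Finsupp.add_apply]
        have := hs j hj
        omega
      rw [hy v hv]
      ring)
    (fun {x y} hx s hs => by
      rw [h.coeff_mul]
      apply Finset.sum_eq_zero
      rintro ⟨u, v⟩ hm
      rw [Finset.HasAntidiagonal.mem_antidiagonal] at hm
      replace hm : u + v = s := hm
      have hu : ∀ j ∈ w, u j = 0 := fun j hj => by
        have hadd : u j + v j = s j := by rw [← hm, Finsupp.add_apply]
        have := hs j hj
        omega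
      rw [hx u hu]
      ring)

lemma mem_Sw {w : Finset (Fin n)} {f : R} :
    f ∈ h.Sw w ↔ ∀ s, (∀ j ∈ w, s j = 0) → h.coeff f s = 0 :=
  TwoSidedIdeal.mem_mk' _ _ _ _ _ _ f

end IsQPowerSeriesRing

namespace IsQPowerSeriesRing

variable {k : Type*} [Field k] {n : ℕ} {Q : QMatrix k n}
variable {R : Type*} [Ring R] [Algebra k R] (h : IsQPowerSeriesRing Q R)

lemma X_mem_Sw {w : Finset (Fin n)} {i : Fin n} (hi : i ∈ w) : h.X i ∈ h.Sw w := by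
  rw [mem_Sw]
  intro s hs
  rw [coeff_X, if_neg]
  intro hsi
  have := hs i hi
  rw [hsi, Finsupp.single_eq_same] at this
  exact one_ne_zero this

lemma Jw_le_Sw (w : Finset (Fin n)) : h.Jw w ≤ h.Sw w := fun f hf =>
  TwoSidedIdeal.mem_span_iff.mp hf (h.Sw w) (by rintro r ⟨i, hi, rfl⟩; exact h.X_mem_Sw hi)

lemma Sw_le_Jw (w : Finset (Fin n)) : h.Sw w ≤ h.Jw w := by
  intro f hf
  rw [mem_Sw] at hf
  classical
  set e : Fin n → (Fin n →₀ ℕ) := fun i => Finsupp.single i 1 with he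
  set fi : Fin n → R := fun i => h.coeff.symm (fun t =>
    if (∀ j ∈ w, j < i → (t + e i) j = 0) then (Q.weight (e i) t)⁻¹ * h.coeff f (t + e i)
    else 0) with hfi
  have hterm : ∀ (i : Fin n) (s : Fin n →₀ ℕ), h.coeff (h.X i * fi i) s =
      if (s i ≠ 0 ∧ ∀ j ∈ w, j < i → s j = 0) then h.coeff f s else 0 := by
    intro i s
    rw [h.coeff_X_mul]
    by_cases h0 : s i = 0
    · rw [if_pos h0, if_neg]
      rintro ⟨hne, -⟩
      exact hne h0
    · rw [if_neg h0]
      have hle : e i ≤ s := Finsupp.single_le_iff.2 (Nat.one_le_iff_ne_zero.2 h0)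
      have hst : (s - e i) + e i = s := tsub_add_cancel_of_le hle
      rw [hfi]
      rw [coeff_symm_apply, hst]
      by_cases hcond : ∀ j ∈ w, j < i → s j = 0
      · rw [if_pos hcond, if_pos ⟨h0, hcond⟩, mul_inv_cancel_left₀ (Q.weight_ne_zero _ _)]
      · rw [if_neg hcond, mul_zero, if_neg]
        rintro ⟨-, hc⟩
        exact hcond hc
  have hdecomp : f = ∑ i ∈ w, h.X i * fi i := by
    apply h.coeff_inj
    intro s
    have hsum : h.coeff (∑ i ∈ w, h.X i * fi i) s = ∑ i ∈ w, h.coeff (h.X i * fi i) s := by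
      rw [map_sum]
      exact Finset.sum_apply s w _
    rw [hsum, Finset.sum_congr rfl (fun i _ => hterm i s)]
    by_cases hex : ∃ i ∈ w, s i ≠ 0
    · obtain ⟨i0, hi0w, hi0⟩ := hex
      have hTne : (w.filter (fun j => s j ≠ 0)).Nonempty :=
        ⟨i0, Finset.mem_filter.2 ⟨hi0w, hi0⟩⟩
      set istar := (w.filter (fun j => s j ≠ 0)).min' hTne with histar
      have histarT : istar ∈ w.filter (fun j => s j ≠ 0) := Finset.min'_mem _ _
      have histarw : istar ∈ w := (Finset.mem_filter.1 histarT).1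
      have histar0 : s istar ≠ 0 := (Finset.mem_filter.1 histarT).2
      rw [Finset.sum_eq_single_of_mem istar histarw]
      · rw [if_pos]
        refine ⟨histar0, fun j hj hlt => ?_⟩
        by_contra hj0
        have : istar ≤ j := Finset.min'_le _ _ (Finset.mem_filter.2 ⟨hj, hj0⟩)
        omega
      · intro j hj hne
        rw [if_neg]
        rintro ⟨hj0, hjcond⟩
        have hij : istar ≤ j := Finset.min'_le _ j (Finset.mem_filter.2 ⟨hj, hj0⟩)
        exact histar0 (hjcond istar histarw (lt_of_le_of_ne hij hne.symm))
    · push_neg at hex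
      rw [Finset.sum_eq_zero, hf s hex]
      intro i _
      rw [if_neg]
      rintro ⟨hi0, -⟩
      exact hi0 (hex i ‹i ∈ w›)
  rw [hdecomp]
  apply sum_mem
  intro i hi
  exact TwoSidedIdeal.mul_mem_right _ _ _ (TwoSidedIdeal.subset_span ⟨i, hi, rfl⟩)

lemma Jw_eq_Sw (w : Finset (Fin n)) : h.Jw w = h.Sw w :=
  le_antisymm (h.Jw_le_Sw w) (h.Sw_le_Jw w)

end IsQPowerSeriesRing

namespace IsQPowerSeriesRing

variable {k : Type*} [Field k] {n : ℕ} {Q : QMatrix k n}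
variable {R : Type*} [Ring R] [Algebra k R] (h : IsQPowerSeriesRing Q R)

lemma exists_mul_X_eq (i : Fin n) (x : R) : ∃ x', x * h.X i = h.X i * x' := by
  refine ⟨h.coeff.symm (fun u => (Q.weight (Finsupp.single i 1) u)⁻¹ *
    (Q.weight u (Finsupp.single i 1) * h.coeff x u)), h.coeff_inj (fun s => ?_)⟩
  rw [h.coeff_mul_X, h.coeff_X_mul]
  by_cases h0 : s i = 0
  · rw [if_pos h0, if_pos h0]
  · rw [if_neg h0, if_neg h0, coeff_symm_apply,
      mul_inv_cancel_left₀ (Q.weight_ne_zero _ _)]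
    ring

lemma exists_X_mul_eq (i : Fin n) (x : R) : ∃ x', h.X i * x = x' * h.X i := by
  refine ⟨h.coeff.symm (fun u => (Q.weight u (Finsupp.single i 1))⁻¹ *
    (Q.weight (Finsupp.single i 1) u * h.coeff x u)), h.coeff_inj (fun s => ?_)⟩
  rw [h.coeff_mul_X, h.coeff_X_mul]
  by_cases h0 : s i = 0
  · rw [if_pos h0, if_pos h0]
  · rw [if_neg h0, if_neg h0, coeff_symm_apply]
    field_simp
    rw [mul_div_assoc, div_self (Q.weight_ne_zero _ _), mul_one]

lemma eq_X_mul_of_coeff (i : Fin n) (g : R) (hg : ∀ s, h.coeff g s ≠ 0 → s i ≠ 0) :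
    ∃ r : R, g = h.X i * r ∧ ∀ t, h.coeff r t =
      (Q.weight (Finsupp.single i 1) t)⁻¹ * h.coeff g (t + Finsupp.single i 1) := by
  refine ⟨h.coeff.symm (fun t => (Q.weight (Finsupp.single i 1) t)⁻¹ *
    h.coeff g (t + Finsupp.single i 1)), h.coeff_inj (fun s => ?_),
    fun t => h.coeff_symm_apply _ t⟩
  rw [h.coeff_X_mul]
  by_cases h0 : s i = 0
  · rw [if_pos h0]
    by_contra hne
    exact hg s hne h0
  · have hle : Finsupp.single i 1 ≤ s := Finsupp.single_le_iff.2 (Nat.one_le_iff_ne_zero.2 h0)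
    rw [if_neg h0, coeff_symm_apply, tsub_add_cancel_of_le hle,
      mul_inv_cancel_left₀ (Q.weight_ne_zero _ _)]

lemma exists_right_inverse (u : R) (hu : h.coeff u 0 ≠ 0) : ∃ z, u * z = 1 := by
  classical
  set c : (Fin n →₀ ℕ) → k := fun s => h.coeff u s with hc
  refine ⟨h.coeff.symm (invCoeff Q c), h.coeff_inj (fun s => ?_)⟩
  rw [h.coeff_mul, h.coeff_one]
  have hterm : ∀ uv ∈ Finset.HasAntidiagonal.antidiagonal s,
      h.coeff u uv.1 * h.coeff (h.coeff.symm (invCoeff Q c)) uv.2 * Q.weight uv.1 uv.2 =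
      (if uv.1 = 0 then c 0 * invCoeff Q c uv.2 else 0) +
      (if uv.1 = 0 then 0 else c uv.1 * invCoeff Q c uv.2 * Q.weight uv.1 uv.2) := by
    intro uv _
    rw [coeff_symm_apply]
    by_cases h1 : uv.1 = 0
    · rw [if_pos h1, if_pos h1, h1, Q.weight_zero_left, add_zero, mul_one]
    · rw [if_neg h1, if_neg h1, zero_add]
  rw [Finset.sum_congr rfl hterm, Finset.sum_add_distrib]
  rw [sum_antidiagonal_left s 0 (fun t => c 0 * invCoeff Q c t)]
  rw [if_pos (show 0 ≤ s from zero_le), tsub_zero]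
  have hrec : invCoeff Q c s = (c 0)⁻¹ * ((if s = 0 then (1:k) else 0) -
      ∑ uv ∈ Finset.HasAntidiagonal.antidiagonal s,
        if uv.1 = 0 then 0 else c uv.1 * invCoeff Q c uv.2 * Q.weight uv.1 uv.2) := by
    rw [invCoeff]
    congr 1
    congr 1
    rw [← Finset.sum_attach (Finset.HasAntidiagonal.antidiagonal s)
      (fun uv => if uv.1 = 0 then 0 else c uv.1 * invCoeff Q c uv.2 * Q.weight uv.1 uv.2)]
    apply Finset.sum_congr rfl
    intro uv _
    rw [dite_eq_ite]
  rw [hrec, mul_inv_cancel_left₀ hu]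
  ring

end IsQPowerSeriesRing

namespace IsQPowerSeriesRing

variable {k : Type*} [Field k] {n : ℕ} {Q : QMatrix k n}
variable {R : Type*} [Ring R] [Algebra k R] (h : IsQPowerSeriesRing Q R)

lemma prod_pow_add (θ : Fin n → kˣ) (a b : Fin n →₀ ℕ) :
    (∏ i, (θ i : k) ^ (a + b) i) = (∏ i, (θ i : k) ^ a i) * ∏ i, (θ i : k) ^ b i := by
  rw [← Finset.prod_mul_distrib]
  apply Finset.prod_congr rfl
  intro i _
  rw [Finsupp.add_apply, pow_add]

lemma prod_pow_single (θ : Fin n → kˣ) (i : Fin n) :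
    (∏ j, (θ j : k) ^ (Finsupp.single i 1) j) = θ i := by
  rw [Finset.prod_eq_single i]
  · rw [Finsupp.single_eq_same, pow_one]
  · intro j _ hj
    rw [Finsupp.single_eq_of_ne hj, pow_zero]
  · intro hi
    exact absurd (Finset.mem_univ i) hi

lemma hAct_X_mul (θ : Fin n → kˣ) (i : Fin n) (r : R) :
    h.hAct θ (h.X i * r) = h.X i * ((θ i : k) • h.hAct θ r) := by
  apply h.coeff_inj
  intro s
  rw [coeff_hAct, coeff_X_mul, coeff_X_mul]
  by_cases h0 : s i = 0
  · rw [if_pos h0, if_pos h0, mul_zero]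
  · rw [if_neg h0, if_neg h0]
    have hle : Finsupp.single i 1 ≤ s := Finsupp.single_le_iff.2 (Nat.one_le_iff_ne_zero.2 h0)
    have hs : (s - Finsupp.single i 1) + Finsupp.single i 1 = s := tsub_add_cancel_of_le hle
    rw [map_smul, Pi.smul_apply, smul_eq_mul, coeff_hAct, ← hs, prod_pow_add, prod_pow_single,
      hs]
    ring

lemma Sw_stable (w : Finset (Fin n)) : h.IsHStable (h.Sw w) := by
  apply h.isHStable_of
  intro θ f hf
  rw [mem_Sw] at hf ⊢
  intro s hs
  rw [coeff_hAct, hf s hs, mul_zero]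

lemma one_not_mem_Sw (w : Finset (Fin n)) : (1 : R) ∉ h.Sw w := by
  rw [mem_Sw]
  intro hmem
  have := hmem 0 (fun j _ => rfl)
  rw [h.coeff_one, if_pos rfl] at this
  exact one_ne_zero this

/-- the two-sided ideal `x_i R` -/
def xiIdeal (i : Fin n) : TwoSidedIdeal R :=
  TwoSidedIdeal.mk' {f : R | ∃ r, f = h.X i * r}
    ⟨0, (mul_zero _).symm⟩
    (fun {x y} hx hy => by
      obtain ⟨r1, rfl⟩ := hx
      obtain ⟨r2, rfl⟩ := hy
      exact ⟨r1 + r2, (mul_add _ _ _).symm⟩)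
    (fun {x} hx => by
      obtain ⟨r1, rfl⟩ := hx
      exact ⟨-r1, (mul_neg _ _).symm⟩)
    (fun {x y} hy => by
      obtain ⟨r1, rfl⟩ := hy
      obtain ⟨x', hx'⟩ := h.exists_mul_X_eq i x
      exact ⟨x' * r1, by rw [← mul_assoc, hx', mul_assoc]⟩)
    (fun {x y} hx => by
      obtain ⟨r1, rfl⟩ := hx
      exact ⟨r1 * y, (mul_assoc _ _ _)⟩)

lemma mem_xiIdeal {i : Fin n} {f : R} : f ∈ h.xiIdeal i ↔ ∃ r, f = h.X i * r :=
  TwoSidedIdeal.mem_mk' _ _ _ _ _ _ f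

/-- the colon ideal `(I : x_i)` -/
def colonX (I : TwoSidedIdeal R) (i : Fin n) : TwoSidedIdeal R :=
  TwoSidedIdeal.mk' {r : R | h.X i * r ∈ I}
    (by simp only [Set.mem_setOf_eq, mul_zero]; exact I.zero_mem)
    (fun {x y} hx hy => by
      simp only [Set.mem_setOf_eq] at *
      rw [mul_add]
      exact I.add_mem hx hy)
    (fun {x} hx => by
      simp only [Set.mem_setOf_eq] at *
      rw [mul_neg]
      exact I.neg_mem hx)
    (fun {x y} hy => by
      simp only [Set.mem_setOf_eq] at *
      obtain ⟨x'', hx''⟩ := h.exists_X_mul_eq i x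
      rw [← mul_assoc, hx'', mul_assoc]
      exact I.mul_mem_left _ _ hy)
    (fun {x y} hx => by
      simp only [Set.mem_setOf_eq] at *
      rw [← mul_assoc]
      exact I.mul_mem_right _ _ hx)

lemma mem_colonX {I : TwoSidedIdeal R} {i : Fin n} {r : R} :
    r ∈ h.colonX I i ↔ h.X i * r ∈ I :=
  TwoSidedIdeal.mem_mk' _ _ _ _ _ _ r

lemma mem_of_X_mul_mem {I : TwoSidedIdeal R} (hP : h.IsHPrime I) {i : Fin n}
    (hXi : h.X i ∉ I) : ∀ r : R, h.X i * r ∈ I → r ∈ I := by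
  obtain ⟨hstab, hne, hprime⟩ := hP
  have hAstab : h.IsHStable (h.xiIdeal i) := by
    apply h.isHStable_of
    intro θ f hf
    rw [mem_xiIdeal] at hf ⊢
    obtain ⟨r, rfl⟩ := hf
    exact ⟨(θ i : k) • h.hAct θ r, h.hAct_X_mul θ i r⟩
  have hBstab : h.IsHStable (h.colonX I i) := by
    apply h.isHStable_of
    intro θ f hf
    rw [mem_colonX] at hf ⊢
    have key : h.X i * h.hAct θ f = ((θ i : k)⁻¹) • h.hAct θ (h.X i * f) := by
      rw [h.hAct_X_mul, mul_smul_comm, smul_smul,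
        inv_mul_cancel₀ (θ i).ne_zero, one_smul]
    rw [key]
    exact smul_mem_ideal I _ (h.hAct_mem I hstab θ hf)
  have hcond : ∀ a ∈ h.xiIdeal i, ∀ b ∈ h.colonX I i, a * b ∈ I := by
    intro a ha b hb
    rw [mem_xiIdeal] at ha
    obtain ⟨r, rfl⟩ := ha
    have hrb : r * b ∈ h.colonX I i := (h.colonX I i).mul_mem_left r b hb
    rw [mem_colonX] at hrb
    rw [mul_assoc]
    exact hrb
  rcases hprime _ _ hAstab hBstab hcond with hAI | hBI
  · exfalso
    apply hXi
    apply hAI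
    rw [mem_xiIdeal]
    exact ⟨1, (mul_one _).symm⟩
  · intro r hr
    apply hBI
    rw [mem_colonX]
    exact hr

end IsQPowerSeriesRing

namespace IsQPowerSeriesRing

variable {k : Type*} [Field k] {n : ℕ} {Q : QMatrix k n}
variable {R : Type*} [Ring R] [Algebra k R] (h : IsQPowerSeriesRing Q R)

lemma not_mul_mem_Sw {w : Finset (Fin n)} {a b : R} (ha : a ∉ h.Sw w) (hb : b ∉ h.Sw w) :
    a * b ∉ h.Sw w := by
  rw [mem_Sw] at ha hb
  push_neg at ha hb
  obtain ⟨u1, hu1v, hu1⟩ := ha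
  obtain ⟨v1, hv1v, hv1⟩ := hb
  classical
  obtain ⟨u₀L, hu₀mem, hu₀min⟩ :=
    (inferInstance : WellFoundedLT (Lex (Fin n →₀ ℕ))).wf.has_min
      {x : Lex (Fin n →₀ ℕ) | h.coeff a (ofLex x) ≠ 0 ∧ ∀ j ∈ w, (ofLex x) j = 0}
      ⟨toLex u1, hu1, hu1v⟩
  obtain ⟨v₀L, hv₀mem, hv₀min⟩ :=
    (inferInstance : WellFoundedLT (Lex (Fin n →₀ ℕ))).wf.has_min
      {x : Lex (Fin n →₀ ℕ) | h.coeff b (ofLex x) ≠ 0 ∧ ∀ j ∈ w, (ofLex x) j = 0}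
      ⟨toLex v1, hv1, hv1v⟩
  set u₀ : Fin n →₀ ℕ := ofLex u₀L with hu₀
  set v₀ : Fin n →₀ ℕ := ofLex v₀L with hv₀
  rw [mem_Sw]
  push_neg
  refine ⟨u₀ + v₀, fun j hj => ?_, ?_⟩
  · rw [Finsupp.add_apply, hu₀mem.2 j hj, hv₀mem.2 j hj]
  · rw [h.coeff_mul, Finset.sum_eq_single_of_mem (u₀, v₀)]
    · exact mul_ne_zero (mul_ne_zero hu₀mem.1 hv₀mem.1) (Q.weight_ne_zero _ _)
    · rw [Finset.HasAntidiagonal.mem_antidiagonal]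
    · rintro ⟨u, v⟩ hm hne
      rw [Finset.HasAntidiagonal.mem_antidiagonal] at hm
      replace hm : u + v = u₀ + v₀ := hm
      by_contra hterm
      have hcu : h.coeff a u ≠ 0 := fun h0 => hterm (by rw [h0, zero_mul, zero_mul])
      have hcv : h.coeff b v ≠ 0 := fun h0 => hterm (by rw [h0, mul_zero, zero_mul])
      have huv : ∀ j ∈ w, u j = 0 ∧ v j = 0 := by
        intro j hj
        have h1 : (u₀ + v₀) j = 0 := by
          rw [Finsupp.add_apply, hu₀mem.2 j hj, hv₀mem.2 j hj]
        have h2 : u j + v j = (u₀ + v₀) j := by rw [← hm, Finsupp.add_apply]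
        omega
      have hule : u₀L ≤ toLex u :=
        not_lt.1 (hu₀min (toLex u) ⟨hcu, fun j hj => (huv j hj).1⟩)
      have hvle : v₀L ≤ toLex v :=
        not_lt.1 (hv₀min (toLex v) ⟨hcv, fun j hj => (huv j hj).2⟩)
      by_cases hueq : u = u₀
      · have hveq : v = v₀ := by
          rw [hueq] at hm
          exact add_left_cancel hm
        exact hne (Prod.ext hueq hveq)
      · have hlt : u₀L < toLex u :=
          lt_of_le_of_ne hule (fun hh => hueq (by rw [hu₀, hh]; rfl))
        have : u₀L + v₀L < toLex u + toLex v :=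
          add_lt_add_of_lt_of_le hlt hvle
        have heq : (toLex u + toLex v : Lex (Fin n →₀ ℕ)) = u₀L + v₀L := by
          show toLex (u + v) = toLex (u₀ + v₀)
          rw [hm]
        rw [heq] at this
        exact lt_irrefl _ this

lemma isHPrime_Jw (w : Finset (Fin n)) : h.IsHPrime (h.Jw w) := by
  rw [h.Jw_eq_Sw]
  refine ⟨h.Sw_stable w, ?_, ?_⟩
  · intro htop
    exact h.one_not_mem_Sw w (by rw [htop]; exact TwoSidedIdeal.mem_top R)
  · intro A B _ _ hAB
    by_contra hcon
    push_neg at hcon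
    obtain ⟨hA, hB⟩ := hcon
    obtain ⟨a, haA, haS⟩ := SetLike.not_le_iff_exists.1 hA
    obtain ⟨b, hbB, hbS⟩ := SetLike.not_le_iff_exists.1 hB
    exact h.not_mul_mem_Sw haS hbS (hAB a haA b hbB)

end IsQPowerSeriesRing

namespace IsQPowerSeriesRing

variable {k : Type*} [Field k] [Infinite k] {n : ℕ} {Q : QMatrix k n}
variable {R : Type*} [Ring R] [Algebra k R] (h : IsQPowerSeriesRing Q R)

lemma descent {I : TwoSidedIdeal R} (hP : h.IsHPrime I) {w : Finset (Fin n)}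
    (hw : ∀ i : Fin n, i ∉ w → h.X i ∉ I) :
    ∀ d : ℕ, ∀ g : R, g ∈ I →
      (∀ s, h.coeff g s ≠ 0 → ((∀ j ∈ w, s j = 0) ∧ d ≤ ndeg s)) →
      ∀ s₀, h.coeff g s₀ ≠ 0 → ndeg s₀ = d → False := by
  intro d
  induction d with
  | zero =>
    intro g hgI hsupp s₀ hs₀ hdeg
    have hs00 : s₀ = 0 := ndeg_eq_zero.1 hdeg
    obtain ⟨z, hz⟩ := h.exists_right_inverse g (hs00 ▸ hs₀)
    have h1 : (1 : R) ∈ I := hz ▸ I.mul_mem_right g z hgI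
    exact hP.2.1 (I.eq_top h1)
  | succ d ih =>
    intro g hgI hsupp s₀ hs₀ hdeg
    have hs0ne : s₀ ≠ 0 := by
      intro h0
      rw [h0] at hdeg
      exact (Nat.succ_ne_zero d) ((ndeg_eq_zero.2 rfl) ▸ hdeg).symm
    obtain ⟨i, hi⟩ : ∃ i, s₀ i ≠ 0 := by
      by_contra hall
      push_neg at hall
      apply hs0ne
      ext j
      simp [hall j]
    have hiw : i ∉ w := fun hmem => hi ((hsupp s₀ hs₀).1 i hmem)
    obtain ⟨t, ht⟩ := exists_pow_ne_one k (m := s₀ i) (Nat.pos_of_ne_zero hi)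
    set θ : Fin n → kˣ := fun j => if j = i then t else 1 with hθ
    have hprod : ∀ s : Fin n →₀ ℕ, (∏ j, (θ j : k) ^ s j) = (t : k) ^ s i := by
      intro s
      rw [Finset.prod_eq_single i]
      · rw [hθ]; simp
      · intro j _ hj
        rw [hθ]; simp [hj]
      · intro hi2
        exact absurd (Finset.mem_univ i) hi2
    set g2 : R := g - h.hAct θ g with hg2
    have hg2c : ∀ s, h.coeff g2 s = (1 - (t : k) ^ s i) * h.coeff g s := by
      intro s
      rw [hg2, map_sub, Pi.sub_apply, coeff_hAct, hprod]
      ring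
    have hg2I : g2 ∈ I := I.sub_mem hgI (h.hAct_mem I hP.1 θ hgI)
    have hg2i : ∀ s, h.coeff g2 s ≠ 0 → s i ≠ 0 := by
      intro s hne hsi
      rw [hg2c, hsi] at hne
      simp at hne
    obtain ⟨r, hr_eq, hr_coeff⟩ := h.eq_X_mul_of_coeff i g2 hg2i
    have hrI : r ∈ I := h.mem_of_X_mul_mem hP (hw i hiw) r (hr_eq ▸ hg2I)
    have hle : Finsupp.single i 1 ≤ s₀ := Finsupp.single_le_iff.2 (Nat.one_le_iff_ne_zero.2 hi)
    have hsub : (s₀ - Finsupp.single i 1) + Finsupp.single i 1 = s₀ := tsub_add_cancel_of_le hle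
    have ht' : (t : k) ^ s₀ i ≠ 1 := by
      intro hh
      apply ht
      apply Units.ext
      rw [Units.val_pow_eq_pow_val, hh, Units.val_one]
    apply ih r hrI ?_ (s₀ - Finsupp.single i 1) ?_ ?_
    · intro τ hτ
      have hg2τ : h.coeff g2 (τ + Finsupp.single i 1) ≠ 0 := by
        intro h0
        apply hτ
        rw [hr_coeff, h0, mul_zero]
      have hgτ : h.coeff g (τ + Finsupp.single i 1) ≠ 0 := by
        intro h0
        exact hg2τ (by rw [hg2c, h0, mul_zero])
      obtain ⟨hvan, hdeg2⟩ := hsupp (τ + Finsupp.single i 1) hgτ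
      constructor
      · intro j hj
        have := hvan j hj
        rw [Finsupp.add_apply] at this
        omega
      · have hnd : ndeg (τ + Finsupp.single i 1) = ndeg τ + 1 := by
          rw [ndeg_add, ndeg_single]
        omega
    · rw [hr_coeff, hsub]
      apply mul_ne_zero (inv_ne_zero (Q.weight_ne_zero _ _))
      rw [hg2c]
      exact mul_ne_zero (sub_ne_zero_of_ne (Ne.symm ht')) hs₀
    · have := congrArg ndeg hsub
      rw [ndeg_add, ndeg_single] at this
      omega

lemma hprime_eq_Jw {I : TwoSidedIdeal R} (hP : h.IsHPrime I) :
    ∃ w : Finset (Fin n), I = h.Jw w := by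
  classical
  set w : Finset (Fin n) := Finset.univ.filter (fun i => h.X i ∈ I) with hwdef
  have hmemw : ∀ i, i ∈ w ↔ h.X i ∈ I := fun i => by simp [hwdef]
  have hJle : h.Jw w ≤ I := fun x hx =>
    TwoSidedIdeal.mem_span_iff.mp hx I (by rintro r ⟨i, hi, rfl⟩; exact (hmemw i).1 hi)
  refine ⟨w, le_antisymm ?_ hJle⟩
  rw [h.Jw_eq_Sw]
  intro f hfI
  by_contra hfS
  rw [mem_Sw] at hfS
  push_neg at hfS
  obtain ⟨sstar, hsvan, hsne⟩ := hfS
  set g0 : R := h.coeff.symm (fun s => if (∀ j ∈ w, s j = 0) then h.coeff f s else 0) with hg0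
  have hg0c : ∀ s, h.coeff g0 s = if (∀ j ∈ w, s j = 0) then h.coeff f s else 0 :=
    fun s => h.coeff_symm_apply _ s
  have hfg0 : f - g0 ∈ h.Sw w := by
    rw [mem_Sw]
    intro s hs
    rw [map_sub, Pi.sub_apply, hg0c, if_pos hs, sub_self]
  have hg0I : g0 ∈ I := by
    have heq : f - (f - g0) = g0 := sub_sub_cancel f g0
    rw [← heq]
    exact I.sub_mem hfI (hJle (h.Sw_le_Jw w hfg0))
  have hg0ne : h.coeff g0 sstar ≠ 0 := by
    rw [hg0c, if_pos hsvan]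
    exact hsne
  have hex : ∃ m : ℕ, ∃ s, h.coeff g0 s ≠ 0 ∧ ndeg s = m := ⟨ndeg sstar, sstar, hg0ne, rfl⟩
  obtain ⟨s₀, hs₀ne, hs₀deg⟩ := Nat.find_spec hex
  apply h.descent hP (fun i hiw hXi => hiw ((hmemw i).2 hXi)) (Nat.find hex) g0 hg0I ?_
    s₀ hs₀ne hs₀deg
  intro s hs
  constructor
  · by_contra hc
    rw [hg0c, if_neg hc] at hs
    exact hs rfl
  · exact Nat.find_min' hex ⟨s, hs, rfl⟩

end IsQPowerSeriesRing
/-- Assume `k` is infinite. Then the `H`-prime ideals of `R` are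
exactly the `2^n` ideals `J_w`, for subsets `w ⊆ {1,…,n}`. -/
theorem stmt_14 {k : Type*} [Field k] [Infinite k] {n : ℕ} (hn : 0 < n) (Q : QMatrix k n)
    (R : Type*) [Ring R] [Algebra k R] (h : IsQPowerSeriesRing Q R) :
    {I : TwoSidedIdeal R | h.IsHPrime I} =
      {I : TwoSidedIdeal R | ∃ w : Finset (Fin n), I = h.Jw w} ∧
    Function.Injective h.Jw := by
  constructor
  · ext I
    simp only [Set.mem_setOf_eq]
    constructor
    · intro hI
      exact h.hprime_eq_Jw hI
    · rintro ⟨w, rfl⟩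
      exact h.isHPrime_Jw w
  · intro w w' hww
    have key : ∀ (w1 w2 : Finset (Fin n)), h.Jw w1 = h.Jw w2 → ∀ i ∈ w1, i ∈ w2 := by
      intro w1 w2 heq i hi
      have hX : h.X i ∈ h.Sw w2 := by
        rw [← h.Jw_eq_Sw, ← heq]
        exact TwoSidedIdeal.subset_span ⟨i, hi, rfl⟩
      by_contra hiw2
      rw [IsQPowerSeriesRing.mem_Sw] at hX
      have := hX (Finsupp.single i 1)
        (fun j hj => Finsupp.single_eq_of_ne (fun hh => hiw2 (by rw [← hh]; exact hj)))
      rw [h.coeff_X, if_pos rfl] at this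
      exact one_ne_zero this
    exact Finset.Subset.antisymm (fun i hi => key w w' hww i hi)
      (fun i hi => key w' w hww.symm i hi)

end
end
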